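/- arXiv:1708.07090 — 8 statements merged into one kernel-verified Lean document; each statement's English description precedes it below -/
import Mathlib

section
/- Let λ be a rigid C_n partition. Then (i) for every i ≥ 1, λ^T_{2i−1} and λ^T_{2i} have the same parity (the longest two rows of the transposed diagram have the same parity, and this pairwise pattern continues); (ii) if λ_1 is odd (i.e. the transposed diagram has an odd number of rows), then λ^T_{λ_1} (the shortest row) is even. -/
lemma countP_le_split (k : ℕ) : ∀ l : List ℕ,
    l.countP (fun a => decide (k ≤ a))
      = l.countP (fun a => decide (k + 1 ≤ a)) + l.count k
  | [] => rfl
  | a :: l => by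
    simp only [List.countP_cons, List.count_cons, countP_le_split k l]
    rcases eq_or_ne a k with h | h
    · subst h; simp; omega
    · rcases Nat.lt_or_ge a k with h2 | h2
      · simp [Nat.not_le.mpr h2, Nat.not_le.mpr (Nat.lt_succ_of_lt h2), h]
      · have h3 : k + 1 ≤ a := Nat.lt_of_le_of_ne h2 (Ne.symm h)
        have h4 : (a == k) = false := by simpa using h
        simp [h2, h3, h4]; omega

/-- Structure of rigid `C_n` partitions: for a partition `lam` of `2n`
(weakly decreasing, positive parts) in which every odd integer occurs an even
number of times, with no gaps and no even integer occurring exactly twice: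
(i) for every `i ≥ 1` the rows `λ^T_{2i-1}` and `λ^T_{2i}` of the transposed
diagram have the same parity (so the longest two rows have the same parity,
and this pairwise pattern continues); (ii) if `λ_1` is odd (the transposed
diagram has an odd number of rows) then the shortest row `λ^T_{λ_1}` is even.
Here `λ^T_k = #{ i : λ_i ≥ k }`. -/
theorem rigid_Cn_partition_structure (n : ℕ) (hn : 0 < n) (lam : List ℕ)
    (hsort : lam.Pairwise (· ≥ ·))
    (hpos : ∀ x ∈ lam, 0 < x)
    (hsum : lam.sum = 2 * n)
    (hCn : ∀ m : ℕ, Odd m → Even (lam.count m))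
    (hgap : ∀ i : ℕ, i + 1 < lam.length → lam.getD i 0 ≤ lam.getD (i + 1) 0 + 1)
    (hrig : ∀ m : ℕ, Even m → lam.count m ≠ 2) :
    (∀ i : ℕ, 1 ≤ i →
      (lam.countP (fun a => decide (2 * i - 1 ≤ a))) % 2
        = (lam.countP (fun a => decide (2 * i ≤ a))) % 2) ∧
    (Odd (lam.getD 0 0) →
      Even (lam.countP (fun a => decide (lam.getD 0 0 ≤ a)))) := by
  constructor
  · intro i hi
    have hodd : Odd (2 * i - 1) := by
      rcases Nat.exists_eq_add_of_le hi with ⟨j, rfl⟩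
      exact ⟨j, by ring_nf; omega⟩
    have heq : 2 * i - 1 + 1 = 2 * i := by omega
    have := countP_le_split (2 * i - 1) lam
    rw [heq] at this
    rw [this]
    rcases hCn _ hodd with ⟨c, hc⟩
    omega
  · intro hodd
    rcases lam with _ | ⟨h, t⟩
    · simp
    simp only [List.getD_cons_zero] at hodd ⊢
    have hle : ∀ a ∈ t, a ≤ h := by
      intro a ha
      exact (List.pairwise_cons.mp hsort).1 a ha
    have : (h :: t).countP (fun a => decide (h ≤ a)) = (h :: t).count h := by
      rw [List.countP_cons, List.count_cons]
      have h1 : (if decide (h ≤ h) = true then 1 else 0)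
          = (if (h == h) = true then 1 else 0) := by simp
      rw [h1]
      congr 1
      rw [List.count_eq_countP]
      apply List.countP_congr
      intro a ha
      have := hle a ha
      constructor
      · intro h1
        have : a = h := le_antisymm this (by simpa using h1)
        simp [this]
      · intro h1
        have : a = h := by simpa using h1
        simp [this]
    rw [this]
    exact hCn h hodd
end

section
/- Let λ be a rigid D_n partition of 2n with length l. Then (i) l is even (the longest row λ^T_1 of the transposed Young diagram has an even number of boxes); (ii) for every i ≥ 1, λ^T_{2i} and λ^T_{2i+1} have the same parity; (iii) if λ_1 is even (i.e. the transposed diagram has an even number of rows), then λ^T_{λ_1} (the shortest row) is even. -/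
private lemma countP_succ_eq (k : ℕ) (l : List ℕ) :
    l.countP (fun a => decide (k ≤ a))
      = l.countP (fun a => decide (k + 1 ≤ a)) + l.count k := by
  induction l with
  | nil => simp
  | cons a t ih =>
    simp only [List.countP_cons, List.count_cons, ih, beq_iff_eq, decide_eq_true_eq]
    split_ifs <;> omega

private lemma sum_mod_two (l : List ℕ) :
    l.sum % 2 = (l.countP (fun a => decide (a % 2 = 1))) % 2 := by
  induction l with
  | nil => simp
  | cons a t ih =>
    simp only [List.sum_cons, List.countP_cons, decide_eq_true_eq]
    split_ifs <;> omega

private lemma even_countP_even (l : List ℕ)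
    (hDn : ∀ m : ℕ, Even m → Even (l.count m)) :
    Even (l.countP (fun a => decide (a % 2 = 0))) := by
  classical
  have h1 : l.countP (fun a => decide (a % 2 = 0))
      = Multiset.card ((l : Multiset ℕ).filter (fun a => a % 2 = 0)) := by
    simp [List.countP_eq_length_filter, Multiset.filter_coe]
  rw [h1, ← Multiset.toFinset_sum_count_eq]
  apply Finset.even_sum
  intro c hc
  have hc' : c % 2 = 0 := by
    have := Multiset.mem_toFinset.mp hc
    exact (Multiset.mem_filter.mp this).2
  rw [Multiset.count_filter_of_pos (p := fun a => a % 2 = 0) hc']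
  simpa [Multiset.coe_count] using hDn c (Nat.even_iff.mpr hc')

/-- Structure of rigid `D_n` partitions: for a partition `lam` of `2n`
(weakly decreasing, positive parts) in which every even integer occurs an even
number of times, with no gaps and no odd integer occurring exactly twice:
(i) the length `l` of `lam` (= the longest row `λ^T_1` of the transposed
diagram) is even; (ii) for every `i ≥ 1` the rows `λ^T_{2i}` and `λ^T_{2i+1}`
of the transposed diagram have the same parity; (iii) if `λ_1` is even then
the shortest row `λ^T_{λ_1}` is even.  Here `λ^T_k = #{ i : λ_i ≥ k }`. -/
theorem rigid_Dn_partition_structure (n : ℕ) (hn : 0 < n) (lam : List ℕ)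
    (hsort : lam.Pairwise (· ≥ ·))
    (hpos : ∀ x ∈ lam, 0 < x)
    (hsum : lam.sum = 2 * n)
    (hDn : ∀ m : ℕ, Even m → Even (lam.count m))
    (hgap : ∀ i : ℕ, i + 1 < lam.length → lam.getD i 0 ≤ lam.getD (i + 1) 0 + 1)
    (hrig : ∀ m : ℕ, Odd m → lam.count m ≠ 2) :
    Even lam.length ∧
    (∀ i : ℕ, 1 ≤ i →
      (lam.countP (fun a => decide (2 * i ≤ a))) % 2
        = (lam.countP (fun a => decide (2 * i + 1 ≤ a))) % 2) ∧
    (Even (lam.getD 0 0) →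
      Even (lam.countP (fun a => decide (lam.getD 0 0 ≤ a)))) := by
  refine ⟨?_, ?_, ?_⟩
  · -- (i)
    have hlen : lam.length = lam.countP (fun a => decide (a % 2 = 1))
        + lam.countP (fun a => decide (a % 2 = 0)) := by
      have e : lam.countP (fun a => decide (a % 2 = 0))
          = lam.countP (fun a => decide ¬(decide (a % 2 = 1) = true)) := by
        apply List.countP_congr
        intro x _
        simp only [decide_eq_true_eq]
        omega
      rw [e]
      exact List.length_eq_countP_add_countP _
    have h1 := sum_mod_two lam
    rw [hsum] at h1
    have h2 := even_countP_even lam hDn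
    rw [Nat.even_iff] at h2 ⊢
    omega
  · -- (ii)
    intro i _
    have h := countP_succ_eq (2 * i) lam
    have h2 := hDn (2 * i) ⟨i, by ring⟩
    rw [Nat.even_iff] at h2
    omega
  · -- (iii)
    intro heven
    match lam, hsort with
    | [], _ => simp
    | a :: t, hsort =>
      have hle : ∀ b ∈ a :: t, b ≤ a := by
        intro b hb
        rcases List.mem_cons.mp hb with rfl | hb
        · exact le_refl _
        · exact (List.pairwise_cons.mp hsort).1 b hb
      have h1 : (a :: t).countP (fun x => decide ((a :: t).getD 0 0 ≤ x))
          = (a :: t).count a := by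
        rw [List.count_eq_countP]
        apply List.countP_congr
        intro x hx
        have := hle x hx
        simp only [decide_eq_true_eq, beq_iff_eq, List.getD_cons_zero]
        omega
      rw [h1]
      exact hDn a (by simpa using heven)
end

section
/- Let λ be a B_n partition with length l (so l is odd). Then exactly (l+1)/2 of the numbers s_k = l − k + λ_k (1 ≤ k ≤ l) are odd and exactly (l−1)/2 of them are even. Consequently, the symbol of λ in the B_n theory has (l+1)/2 entries in its top row and (l−1)/2 entries in its bottom row. -/
/-- `svals μ` lists the numbers `s_k = l - k + μ_k` (`1 ≤ k ≤ l`, `l` the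
length of `μ`), computed with 0-based indices: entry `k` is `(l - 1 - k) + μ_k`.
For weakly decreasing `μ` this list is strictly decreasing. -/
def svals (μ : List ℕ) : List ℕ :=
  μ.mapIdx (fun k a => (μ.length - 1 - k) + a)


lemma svals_cons (a : ℕ) (μ : List ℕ) :
    svals (a :: μ) = (μ.length + a) :: svals μ := by
  apply List.ext_getElem
  · simp [svals]
  · intro i h1 h2
    rcases i with _ | j
    · simp [svals]
    · simp only [svals, List.getElem_cons_succ, List.getElem_mapIdx, List.length_cons]
      omega

lemma keyAux (N : ℕ) : ∀ μ : List ℕ, μ.length ≤ N → μ.Pairwise (· ≥ ·) →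
    (∀ m : ℕ, Even m → Even (μ.count m)) →
    ((svals μ).countP (fun x => decide (x % 2 = 1)) = (μ.length + μ.length % 2) / 2 ∧
     (svals μ).countP (fun x => decide (x % 2 = 0)) = μ.length / 2 ∧
     μ.sum % 2 = μ.length % 2)
  := by
  induction N with
  | zero =>
    intro μ hlen _ _
    rw [List.length_eq_zero_iff.mp (Nat.le_zero.mp hlen)]
    simp [svals]
  | succ N ih =>
    rintro (_ | ⟨a, rest⟩) hlen hs hB
    · simp [svals]
    · rcases Nat.even_or_odd a with hae | hao
      · -- a even: rest must start with a
        have hcount : Even ((a :: rest).count a) := hB a hae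
        have hmem : a ∈ rest := by
          rw [List.count_cons_self] at hcount
          rcases Nat.even_iff.mp hcount with h
          have : rest.count a ≠ 0 := by omega
          exact List.count_pos_iff.mp (Nat.pos_of_ne_zero this)
        obtain ⟨b, rest', rfl⟩ : ∃ b rest', rest = b :: rest' := by
          cases rest with
          | nil => simp at hmem
          | cons b r => exact ⟨b, r, rfl⟩
        have hba : b = a := by
          have h1 : a ≥ b := (List.pairwise_cons.mp hs).1 b (by simp)
          rcases List.mem_cons.mp hmem with h | hmem'
          · exact h.symm
          · have h2 : b ≥ a := (List.pairwise_cons.mp (List.pairwise_cons.mp hs).2).1 a hmem'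
            omega
        subst hba
        have hs' : rest'.Pairwise (· ≥ ·) := ((List.pairwise_cons.mp (List.pairwise_cons.mp hs).2).2)
        have hB' : ∀ m : ℕ, Even m → Even (rest'.count m) := by
          intro m hm
          have := hB m hm
          rcases eq_or_ne m b with rfl | hne
          · simp only [List.count_cons_self] at this
            rcases this with ⟨t, ht⟩
            exact ⟨t - 1, by omega⟩
          · simpa [List.count_cons, hne, hne.symm] using this
        obtain ⟨h1, h2, h3⟩ := ih rest' (by simp at hlen ⊢; omega) hs' hB'
        rw [svals_cons, svals_cons]
        simp only [List.countP_cons, List.length_cons, List.sum_cons,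
          decide_eq_true_eq]
        obtain ⟨c, rfl⟩ := hae
        refine ⟨?_, ?_, ?_⟩ <;> first | (split_ifs <;> omega) | omega
      · -- a odd
        have hs' : rest.Pairwise (· ≥ ·) := (List.pairwise_cons.mp hs).2
        have hB' : ∀ m : ℕ, Even m → Even (rest.count m) := by
          intro m hm
          have := hB m hm
          have hne : m ≠ a := by
            rintro rfl
            exact (Nat.not_odd_iff_even.mpr hm) hao
          simpa [List.count_cons, hne, hne.symm] using this
        obtain ⟨h1, h2, h3⟩ := ih rest (by simp at hlen ⊢; omega) hs' hB'
        rw [svals_cons]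
        simp only [List.countP_cons, List.length_cons, List.sum_cons,
          decide_eq_true_eq]
        obtain ⟨c, hc⟩ := hao
        subst hc
        refine ⟨?_, ?_, ?_⟩ <;> first | (split_ifs <;> omega) | omega

lemma key (μ : List ℕ) (hs : μ.Pairwise (· ≥ ·))
    (hB : ∀ m : ℕ, Even m → Even (μ.count m)) :
    (svals μ).countP (fun x => decide (x % 2 = 1)) = (μ.length + μ.length % 2) / 2 ∧
    (svals μ).countP (fun x => decide (x % 2 = 0)) = μ.length / 2 ∧
    μ.sum % 2 = μ.length % 2 :=
  keyAux μ.length μ le_rfl hs hB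

/-- The odd values `2f_1+1 < … < 2f_M+1` of `svals μ`, in increasing order. -/
def oddVals (μ : List ℕ) : List ℕ :=
  ((svals μ).filter (fun x => decide (x % 2 = 1))).reverse

/-- The even values `2g_1 < … < 2g_{M'}` of `svals μ`, in increasing order. -/
def evenVals (μ : List ℕ) : List ℕ :=
  ((svals μ).filter (fun x => decide (x % 2 = 0))).reverse

/-- The top row of the symbol of `μ`: `α_i = f_i - i + 1` where
`2f_i + 1` is the `i`-th smallest odd value of `svals μ` (0-based entry `i`
is `α_{i+1} = f_{i+1} - i`). -/
def topRow (μ : List ℕ) : List ℕ :=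
  (oddVals μ).mapIdx (fun i v => (v - 1) / 2 - i)

/-- The bottom row of the symbol of `μ`: `β_i = g_i - i + 1` where `2g_i` is
the `i`-th smallest even value of `svals μ`. -/
def botRow (μ : List ℕ) : List ℕ :=
  (evenVals μ).mapIdx (fun i v => v / 2 - i)

/-- For a `B_n` partition `lam` of `2n+1` with length `l`, exactly `(l+1)/2`
of the numbers `s_k = l - k + λ_k` are odd and exactly `(l-1)/2` are even;
consequently the symbol of `lam` in the `B_n` theory has `(l+1)/2` entries in
its top row and `(l-1)/2` entries in its bottom row. -/
theorem Bn_symbol_row_sizes (n : ℕ) (lam : List ℕ)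
    (hsort : lam.Pairwise (· ≥ ·))
    (hpos : ∀ x ∈ lam, 0 < x)
    (hsum : lam.sum = 2 * n + 1)
    (hBn : ∀ m : ℕ, Even m → Even (lam.count m)) :
    ((svals lam).countP (fun x => decide (x % 2 = 1))) = (lam.length + 1) / 2 ∧
    ((svals lam).countP (fun x => decide (x % 2 = 0))) = (lam.length - 1) / 2 ∧
    (topRow lam).length = (lam.length + 1) / 2 ∧
    (botRow lam).length = (lam.length - 1) / 2 := by
  obtain ⟨h1, h2, h3⟩ := key lam hsort hBn
  have hodd : lam.length % 2 = 1 := by omega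
  have c1 : (svals lam).countP (fun x => decide (x % 2 = 1)) = (lam.length + 1) / 2 := by
    rw [h1, hodd]
  have c2 : (svals lam).countP (fun x => decide (x % 2 = 0)) = (lam.length - 1) / 2 := by
    rw [h2]; omega
  refine ⟨c1, c2, ?_, ?_⟩
  · rw [topRow, List.length_mapIdx, oddVals, List.length_reverse,
      ← List.countP_eq_length_filter, c1]
  · rw [botRow, List.length_mapIdx, evenVals, List.length_reverse,
      ← List.countP_eq_length_filter, c2]
end

section
/- (Rule B) Let μ = (μ_1 ≥ … ≥ μ_l) be a weakly decreasing sequence of nonnegative integers, let 1 ≤ i ≤ l−1 satisfy μ_i = μ_{i+1} and (i = 1 or μ_{i−1} ≥ μ_i + 1), and let μ' be obtained from μ by adding 1 to each of μ_i and μ_{i+1}. Write (α, β) and (α', β') for the symbols of μ and μ'. If s_i = l − i + μ_i is even, then s_{i+1} = s_i − 1 is odd, say the j-th smallest odd value of s; in this case β' = β, α'_a = α_a for all a ≠ j, and α'_j = α_j + 1. If s_i is odd, then s_{i+1} is the j-th smallest even value of s for some j, and α' = α, β'_b = β_b for all b ≠ j, β'_j = β_j + 1. In other words, after adding a row 1^2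 to two equal parts, the entry of the symbol corresponding to the lower part increases by one while all other entries are unchanged. -/
section Aux
variable {α β : Type*}

lemma mapIdx_set' (f : ℕ → α → β) (L : List α) (j : ℕ) (v : α) (h : j < L.length) :
    (L.set j v).mapIdx f = (L.mapIdx f).set j (f j v) := by
  apply List.ext_getElem
  · simp
  · intro n h1 h2
    simp only [List.getElem_mapIdx, List.getElem_set]
    rcases eq_or_ne j n with rfl | hne
    · simp
    · simp [hne]

lemma set_mid (R : List α) (x v : α) (T : List α) :
    (R ++ x :: T).set R.length v = R ++ v :: T := by
  induction R with
  | nil => simp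
  | cons r R ih => simp [ih]

lemma getD_mid (R : List α) (x : α) (T : List α) (d : α) :
    (R ++ x :: T).getD R.length d = x := by
  induction R with
  | nil => simp
  | cons r R ih => simpa using ih

lemma indexOf_mid [DecidableEq α] (R : List α) (x : α) (T : List α) (hx : x ∉ R) :
    (R ++ x :: T).idxOf x = R.length := by
  induction R with
  | nil => simp [List.idxOf_cons_self]
  | cons r R ih =>
      simp only [List.cons_append, List.length_cons]
      rw [List.idxOf_cons_ne _ (by simp at hx; exact Ne.symm hx.1)]
      simp [ih (by simp at hx; exact hx.2)]

lemma chain_parity_bound : ∀ (L : List ℕ) (b : ℕ), L.Pairwise (· > ·) →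
    (∀ x ∈ L, x % 2 = b % 2) → (∀ x ∈ L, x < b) → 2 * L.length ≤ b := by
  intro L
  induction L with
  | nil => intro b _ _ _; simp
  | cons x L ih =>
      intro b hp hpar hlt
      rw [List.pairwise_cons] at hp
      have h1 : 2 * L.length ≤ x := by
        refine ih x hp.2 (fun y hy => ?_) (fun y hy => hp.1 y hy)
        have := hpar y (by simp [hy]); have := hpar x (by simp)
        have := hp.1 y hy
        omega
      have h2 : x < b := hlt x (by simp)
      have h3 : x % 2 = b % 2 := hpar x (by simp)
      simp only [List.length_cons]
      omega

lemma length_svals (μ : List ℕ) : (svals μ).length = μ.length := by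
  simp [svals]

lemma getElem_svals (μ : List ℕ) (k : ℕ) (h : k < μ.length) :
    (svals μ)[k]'(by simp [length_svals, h]) = μ.length - 1 - k + μ[k] := by
  simp [svals, List.getElem_mapIdx]

lemma svals_set (μ : List ℕ) (k x : ℕ) (h : k < μ.length) :
    svals (μ.set k x) = (svals μ).set k (μ.length - 1 - k + x) := by
  unfold svals
  rw [List.length_set]
  rw [mapIdx_set' _ _ _ _ h]

lemma svals_pairwise (μ : List ℕ) (hsort : μ.Pairwise (· ≥ ·)) :
    (svals μ).Pairwise (· > ·) := by
  rw [List.pairwise_iff_getElem]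
  intro k k' hk hk' hlt
  rw [length_svals] at hk hk'
  rw [getElem_svals _ _ hk, getElem_svals _ _ hk']
  have : μ[k'] ≤ μ[k] := by
    rw [List.pairwise_iff_getElem] at hsort
    exact hsort k k' hk hk' hlt
  omega

end Aux

/-- **Rule B.** Let `μ` be a weakly decreasing sequence of nonnegative
integers and `i` a (0-based) index with `i + 1 < l`, `μ_i = μ_{i+1}`, and
(`i` first or `μ_{i-1} ≥ μ_i + 1`).  Let `μ'` be `μ` with `1` added to both
`μ_i` and `μ_{i+1}`.  Then `s_{i+1} = s_i - 1`.  If `s_i` is even, then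
`s_{i+1}` is odd, say the `j`-th smallest odd value of `s`; the bottom row of
the symbol is unchanged and the `j`-th entry of the top row increases by one,
all other entries unchanged.  If `s_i` is odd, then `s_{i+1}` is the `j`-th
smallest even value of `s`; the top row is unchanged and the `j`-th entry of
the bottom row increases by one. -/
theorem ruleB (μ : List ℕ) (hsort : μ.Pairwise (· ≥ ·)) (i : ℕ)
    (hi : i + 1 < μ.length)
    (heq : μ.getD i 0 = μ.getD (i + 1) 0)
    (hsep : i = 0 ∨ μ.getD (i - 1) 0 ≥ μ.getD i 0 + 1) :
    ∀ μ' : List ℕ,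
      μ' = (μ.set i (μ.getD i 0 + 1)).set (i + 1) (μ.getD (i + 1) 0 + 1) →
    (svals μ).getD (i + 1) 0 = (svals μ).getD i 0 - 1 ∧
    (((svals μ).getD i 0) % 2 = 0 →
      ((svals μ).getD (i + 1) 0) % 2 = 1 ∧
      botRow μ' = botRow μ ∧
      topRow μ' = (topRow μ).set ((oddVals μ).idxOf ((svals μ).getD (i + 1) 0))
        ((topRow μ).getD ((oddVals μ).idxOf ((svals μ).getD (i + 1) 0)) 0 + 1)) ∧
    (((svals μ).getD i 0) % 2 = 1 →
      ((svals μ).getD (i + 1) 0) % 2 = 0 ∧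
      topRow μ' = topRow μ ∧
      botRow μ' = (botRow μ).set ((evenVals μ).idxOf ((svals μ).getD (i + 1) 0))
        ((botRow μ).getD ((evenVals μ).idxOf ((svals μ).getD (i + 1) 0)) 0 + 1)) := by
  intro μ' hμ'
  have hlen := length_svals μ
  have hi0 : i < μ.length := by omega
  have hiS : i < (svals μ).length := by omega
  have hi1S : i + 1 < (svals μ).length := by omega
  have hμi : μ.getD i 0 = μ[i] := List.getD_eq_getElem μ 0 hi0
  have hμi1 : μ.getD (i+1) 0 = μ[i+1] := List.getD_eq_getElem μ 0 hi
  have hμeq : μ[i+1] = μ[i] := by rw [← hμi, ← hμi1, heq]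
  set a := μ.length - 1 - i + μ[i] with ha
  have e1 : (svals μ)[i]'hiS = a := getElem_svals μ i hi0
  have e2 : (svals μ)[i+1]'hi1S = a - 1 := by
    rw [getElem_svals μ (i+1) hi]; omega
  have hsi : (svals μ).getD i 0 = a := by
    rw [List.getD_eq_getElem _ 0 hiS]; exact e1
  have hsi1 : (svals μ).getD (i+1) 0 = a - 1 := by
    rw [List.getD_eq_getElem _ 0 hi1S]; exact e2
  have ha1 : 1 ≤ a := by omega
  set X := (svals μ).take i with hX
  set Y := (svals μ).drop (i+1+1) with hY
  have hXlen : X.length = i := by rw [hX, List.length_take]; omega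
  have hdec : svals μ = X ++ a :: (a - 1) :: Y := by
    conv_lhs => rw [← List.take_append_drop i (svals μ),
      List.drop_eq_getElem_cons hiS, List.drop_eq_getElem_cons hi1S, e1, e2]
  have hμ'dec : svals μ' = X ++ (a+1) :: a :: Y := by
    have h1 : i + 1 < (μ.set i (μ.getD i 0 + 1)).length := by
      rw [List.length_set]; exact hi
    rw [hμ', svals_set _ _ _ h1, svals_set _ _ _ hi0, List.length_set]
    have hv1 : μ.length - 1 - i + (μ.getD i 0 + 1) = a + 1 := by omega
    have hv2 : μ.length - 1 - (i+1) + (μ.getD (i+1) 0 + 1) = a := by omega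
    rw [hv1, hv2, hdec]
    have s1 : (X ++ a :: (a-1) :: Y).set i (a+1) = X ++ (a+1) :: (a-1) :: Y := by
      rw [← hXlen]; exact set_mid _ _ _ _
    have s2 : (X ++ (a+1) :: (a-1) :: Y).set (i+1) a = X ++ (a+1) :: a :: Y := by
      have e : X ++ (a+1) :: (a-1) :: Y = (X ++ [a+1]) ++ (a-1) :: Y := by simp
      have e' : X ++ (a+1) :: a :: Y = (X ++ [a+1]) ++ a :: Y := by simp
      have hl2 : (X ++ [a+1]).length = i + 1 := by simp [hXlen]
      rw [e, e', ← hl2]; exact set_mid _ _ _ _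
    rw [s1, s2]
  have hp := svals_pairwise μ hsort
  rw [hdec] at hp
  have hp2 := (List.pairwise_append.mp hp).2.1
  rw [List.pairwise_cons] at hp2
  have hp3 := hp2.2
  rw [List.pairwise_cons] at hp3
  have hYlt : ∀ y ∈ Y, y < a - 1 := fun y hy => hp3.1 y hy
  have hYpair : Y.Pairwise (· > ·) := hp3.2
  refine ⟨by omega, ?_, ?_⟩
  · -- even case
    intro hpar
    rw [hsi] at hpar
    have ha2 : 2 ≤ a := by omega
    refine ⟨by rw [hsi1]; omega, ?_, ?_⟩
    · -- bottom row unchanged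
      have hfe : (svals μ').filter (fun x => decide (x % 2 = 0))
          = (svals μ).filter (fun x => decide (x % 2 = 0)) := by
        rw [hdec, hμ'dec]
        simp only [List.filter_append, List.filter_cons]
        simp [show a % 2 = 0 from hpar, show ¬ (a+1) % 2 = 0 by omega,
          show ¬ (a-1) % 2 = 0 by omega]
      unfold botRow evenVals
      rw [hfe]
    · -- top row
      set Xo := X.filter (fun x => decide (x % 2 = 1)) with hXo
      set Yo := Y.filter (fun x => decide (x % 2 = 1)) with hYo
      have hofilt : (svals μ).filter (fun x => decide (x % 2 = 1)) = Xo ++ (a-1) :: Yo := by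
        rw [hdec]
        simp only [List.filter_append, List.filter_cons]
        simp [show ¬ a % 2 = 1 by omega, show (a-1) % 2 = 1 by omega]
        rfl
      have hofilt' : (svals μ').filter (fun x => decide (x % 2 = 1)) = Xo ++ (a+1) :: Yo := by
        rw [hμ'dec]
        simp only [List.filter_append, List.filter_cons]
        simp [show ¬ a % 2 = 1 by omega, show (a+1) % 2 = 1 by omega]
        rfl
      have hodd : oddVals μ = Yo.reverse ++ (a-1) :: Xo.reverse := by
        unfold oddVals; rw [hofilt]; simp
      have hodd' : oddVals μ' = Yo.reverse ++ (a+1) :: Xo.reverse := by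
        unfold oddVals; rw [hofilt']; simp
      set j := Yo.reverse.length with hj
      have hnm : (a-1) ∉ Yo.reverse := by
        intro hmem
        rw [List.mem_reverse] at hmem
        have := hYlt (a-1) (List.mem_of_mem_filter hmem)
        omega
      have hjdx : (oddVals μ).idxOf (a-1) = j := by
        rw [hodd, hj]; exact indexOf_mid _ _ _ hnm
      have hjlt : j < (oddVals μ).length := by rw [hodd, hj]; simp
      have hset : oddVals μ' = (oddVals μ).set j (a+1) := by
        rw [hodd, hodd', hj, set_mid]
      have htop' : topRow μ' = (topRow μ).set j ((a+1-1)/2 - j) := by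
        unfold topRow
        rw [hset, mapIdx_set' _ _ _ _ hjlt]
      have hoj : (oddVals μ)[j]'hjlt = a - 1 := by
        rw [← List.getD_eq_getElem _ 0 hjlt, hodd, hj]
        exact getD_mid _ _ _ _
      have hgd : (topRow μ).getD j 0 = (a-1-1)/2 - j := by
        unfold topRow
        rw [List.getD_eq_getElem _ 0 (by simpa using hjlt), List.getElem_mapIdx, hoj]
      have hbound : 2 * Yo.length ≤ a - 1 := by
        apply chain_parity_bound Yo (a-1) (List.Pairwise.filter _ hYpair)
        · intro x hx
          have hx1 : x % 2 = 1 := by simpa using (List.mem_filter.mp hx).2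
          omega
        · intro x hx; exact hYlt x (List.mem_of_mem_filter hx)
      have hjle : 2 * j + 2 ≤ a := by
        rw [hj, List.length_reverse]; omega
      rw [hsi1, hjdx, htop', hgd]
      congr 1
      omega
  · -- odd case
    intro hpar
    rw [hsi] at hpar
    refine ⟨by rw [hsi1]; omega, ?_, ?_⟩
    · -- top row unchanged
      have hfo : (svals μ').filter (fun x => decide (x % 2 = 1))
          = (svals μ).filter (fun x => decide (x % 2 = 1)) := by
        rw [hdec, hμ'dec]
        simp only [List.filter_append, List.filter_cons]
        simp [show a % 2 = 1 from hpar, show ¬ (a+1) % 2 = 1 by omega,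
          show ¬ (a-1) % 2 = 1 by omega]
      unfold topRow oddVals
      rw [hfo]
    · -- bottom row
      set Xe := X.filter (fun x => decide (x % 2 = 0)) with hXe
      set Ye := Y.filter (fun x => decide (x % 2 = 0)) with hYe
      have hefilt : (svals μ).filter (fun x => decide (x % 2 = 0)) = Xe ++ (a-1) :: Ye := by
        rw [hdec]
        simp only [List.filter_append, List.filter_cons]
        simp [show ¬ a % 2 = 0 by omega, show (a-1) % 2 = 0 by omega]
        rfl
      have hefilt' : (svals μ').filter (fun x => decide (x % 2 = 0)) = Xe ++ (a+1) :: Ye := by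
        rw [hμ'dec]
        simp only [List.filter_append, List.filter_cons]
        simp [show ¬ a % 2 = 0 by omega, show (a+1) % 2 = 0 by omega]
        rfl
      have hev : evenVals μ = Ye.reverse ++ (a-1) :: Xe.reverse := by
        unfold evenVals; rw [hefilt]; simp
      have hev' : evenVals μ' = Ye.reverse ++ (a+1) :: Xe.reverse := by
        unfold evenVals; rw [hefilt']; simp
      set j := Ye.reverse.length with hj
      have hnm : (a-1) ∉ Ye.reverse := by
        intro hmem
        rw [List.mem_reverse] at hmem
        have := hYlt (a-1) (List.mem_of_mem_filter hmem)
        omega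
      have hjdx : (evenVals μ).idxOf (a-1) = j := by
        rw [hev, hj]; exact indexOf_mid _ _ _ hnm
      have hjlt : j < (evenVals μ).length := by rw [hev, hj]; simp
      have hset : evenVals μ' = (evenVals μ).set j (a+1) := by
        rw [hev, hev', hj, set_mid]
      have hbot' : botRow μ' = (botRow μ).set j ((a+1)/2 - j) := by
        unfold botRow
        rw [hset, mapIdx_set' _ _ _ _ hjlt]
      have hej : (evenVals μ)[j]'hjlt = a - 1 := by
        rw [← List.getD_eq_getElem _ 0 hjlt, hev, hj]
        exact getD_mid _ _ _ _
      have hgd : (botRow μ).getD j 0 = (a-1)/2 - j := by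
        unfold botRow
        rw [List.getD_eq_getElem _ 0 (by simpa using hjlt), List.getElem_mapIdx, hej]
      have hbound : 2 * Ye.length ≤ a - 1 := by
        apply chain_parity_bound Ye (a-1) (List.Pairwise.filter _ hYpair)
        · intro x hx
          have hx1 : x % 2 = 0 := by simpa using (List.mem_filter.mp hx).2
          omega
        · intro x hx; exact hYlt x (List.mem_of_mem_filter hx)
      have hjle : 2 * j + 1 ≤ a := by
        rw [hj, List.length_reverse]; omega
      rw [hsi1, hjdx, hbot', hgd]
      congr 1
      omega
end

section
/- (Extended Rule B) Let μ = (μ_1 ≥ … ≥ μ_l) be a weakly decreasing sequence of nonnegative integers and let i ≥ 1, m ≥ 1 with i + 2m − 1 ≤ l and μ_i = μ_{i+1} = … = μ_{i+2m−1}. Let μ' be obtained from μ by adding 1 to each of these 2m parts, and set s_k = l − k + μ_k and s'_k = l − k + μ'_k. Then the multiset {s'_1, …, s'_l} is obtained from the multiset {s_1, …, s_l} by removing the m values s_i − 1, s_i − 3, …, s_i − 2m + 1 and inserting the m values s_i + 1, s_i − 1, …, s_i − 2m + 3 (i.e., each removed value is replaced by that value plus 2). In particular, if s_i is odd then the multiset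 of odd values of s' equals the multiset of odd values of s, and the m even values s_i − 1, …, s_i − 2m + 1 each increase by 2; if s_i is even then the multiset of even values is unchanged and the m odd values s_i − 1, …, s_i − 2m + 1 each increase by 2. -/
set_option maxHeartbeats 1000000 in
lemma split_block (m c : ℕ) :
    (((List.range (2*m)).map (fun j => c - j)) : Multiset ℕ)
      = (((List.range m).map (fun t => c - 2*t)) : Multiset ℕ)
        + (((List.range m).map (fun t => c - (2*t+1))) : Multiset ℕ) := by
  induction m with
  | zero => simp
  | succ n ih =>
    have h2 : 2 * (n+1) = (2*n + 1) + 1 := by ring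
    simp only [h2, List.range_succ, List.map_append, List.map_cons, List.map_nil,
      ← Multiset.coe_add]
    rw [ih]
    simp only [← Multiset.cons_coe, ← Multiset.singleton_add]
    abel


set_option maxHeartbeats 1000000 in
/-- **Extended Rule B.** Let `μ` be weakly decreasing with `2m` equal
consecutive parts `μ_i = … = μ_{i+2m-1}` (0-based indices, `i + 2m ≤ l`),
and let `μ'` add `1` to each of these parts.  Then the multiset of values
`s'_k` is obtained from the multiset of values `s_k` by removing the `m`
values `s_i - 1, s_i - 3, …, s_i - 2m + 1` and inserting the `m` values
`s_i + 1, s_i - 1, …, s_i - 2m + 3` (each removed value is replaced by that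
value plus 2).  In particular, if `s_i` is odd the multiset of odd values is
unchanged, and if `s_i` is even the multiset of even values is unchanged. -/
theorem extendedRuleB (μ : List ℕ) (hsort : μ.Pairwise (· ≥ ·)) (i m : ℕ)
    (hm : 1 ≤ m) (hle : i + 2 * m ≤ μ.length)
    (heq : ∀ k, i ≤ k → k < i + 2 * m → μ.getD k 0 = μ.getD i 0) :
    ∀ μ' : List ℕ,
      μ' = μ.mapIdx (fun k a => if i ≤ k ∧ k < i + 2 * m then a + 1 else a) →
    ((svals μ' : Multiset ℕ) =
      (svals μ : Multiset ℕ)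
        - (((List.range m).map (fun t => (svals μ).getD i 0 - (2 * t + 1))) : Multiset ℕ)
        + (((List.range m).map (fun t => (svals μ).getD i 0 + 1 - 2 * t)) : Multiset ℕ)) ∧
    (((svals μ).getD i 0) % 2 = 1 →
      (((svals μ').filter (fun x => decide (x % 2 = 1))) : Multiset ℕ)
        = (((svals μ).filter (fun x => decide (x % 2 = 1))) : Multiset ℕ)) ∧
    (((svals μ).getD i 0) % 2 = 0 →
      (((svals μ').filter (fun x => decide (x % 2 = 0))) : Multiset ℕ)
        = (((svals μ).filter (fun x => decide (x % 2 = 0))) : Multiset ℕ)) := by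
  intro μ' hμ'
  set l := μ.length with hl
  set L := svals μ with hLdef
  set L' := svals μ' with hL'def
  have hi : i < l := by omega
  have hμ'len : μ'.length = l := by simp [hμ', hl]
  have hLlen : L.length = l := by simp [hLdef, svals, hl]
  have hL'len : L'.length = l := by simp [hL'def, svals, hμ'len]
  -- pointwise values
  have hLget : ∀ k (hk : k < l), L[k]'(by omega) = (l - 1 - k) + μ[k]'(by omega) := by
    intro k hk
    simp [hLdef, svals, List.getElem_mapIdx, hl]
  have hμ'get : ∀ k (hk : k < l),
      μ'[k]'(by omega) = if i ≤ k ∧ k < i + 2*m then μ[k]'(by omega) + 1 else μ[k]'(by omega) := by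
    intro k hk
    simp [hμ', List.getElem_mapIdx]
  have hL'get : ∀ k (hk : k < l), L'[k]'(by omega) = (l - 1 - k) + μ'[k]'(by omega) := by
    intro k hk
    simp [hL'def, svals, List.getElem_mapIdx, hμ'len]
  have hμeq : ∀ k (h1 : i ≤ k) (h2 : k < i + 2*m), μ[k]'(by omega) = μ[i]'(by omega) := by
    intro k h1 h2
    have h' := heq k h1 h2
    rw [List.getD_eq_getElem μ 0 (show k < μ.length by omega),
      List.getD_eq_getElem μ 0 (show i < μ.length by omega)] at h'
    exact h'
  set c := L.getD i 0 with hcdef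
  have hc : c = (l - 1 - i) + μ[i]'(by omega) := by
    rw [hcdef, List.getD_eq_getElem _ _ (by omega), hLget i hi]
  have hcge : 2*m - 1 ≤ c := by omega
  -- block values
  have hblock : ∀ j (hj : j < 2*m), L[i+j]'(by omega) = c - j := by
    intro j hj
    rw [hLget (i+j) (by omega), hμeq (i+j) (by omega) (by omega)]
    omega
  have hblock' : ∀ j (hj : j < 2*m), L'[i+j]'(by omega) = c + 1 - j := by
    intro j hj
    rw [hL'get (i+j) (by omega), hμ'get (i+j) (by omega)]
    rw [if_pos ⟨by omega, by omega⟩, hμeq (i+j) (by omega) (by omega)]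
    omega
  have houtside : ∀ k (hk : k < l), (k < i ∨ i + 2*m ≤ k) → L'[k]'(by omega) = L[k]'(by omega) := by
    intro k hk hout
    rw [hL'get k hk, hLget k hk, hμ'get k hk, if_neg (by omega)]
  -- list decompositions
  have hTake : L'.take i = L.take i := by
    apply List.ext_getElem (by simp [hLlen, hL'len])
    intro k h1 h2
    rw [List.getElem_take, List.getElem_take]
    have hk : k < i := by simp [hLlen] at h2; omega
    exact houtside k (by omega) (Or.inl hk)
  have hDrop : L'.drop (i + 2*m) = L.drop (i + 2*m) := by
    apply List.ext_getElem (by simp [hLlen, hL'len])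
    intro k h1 h2
    rw [List.getElem_drop, List.getElem_drop]
    have hk : i + 2*m + k < l := by simp [hLlen] at h2; omega
    exact houtside (i + 2*m + k) hk (Or.inr (by omega))
  have hMidL : (L.drop i).take (2*m) = (List.range (2*m)).map (fun j => c - j) := by
    apply List.ext_getElem (by simp [hLlen]; omega)
    intro k h1 h2
    rw [List.getElem_take, List.getElem_drop, List.getElem_map, List.getElem_range]
    exact hblock k (by simp at h2; omega)
  have hMidL' : (L'.drop i).take (2*m) = (List.range (2*m)).map (fun j => c + 1 - j) := by
    apply List.ext_getElem (by simp [hL'len]; omega)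
    intro k h1 h2
    rw [List.getElem_take, List.getElem_drop, List.getElem_map, List.getElem_range]
    exact hblock' k (by simp at h2; omega)
  have hLsplit : L = L.take i ++ ((List.range (2*m)).map (fun j => c - j) ++ L.drop (i + 2*m)) := by
    conv_lhs => rw [← List.take_append_drop i L]
    congr 1
    rw [← hMidL]
    conv_lhs => rw [← List.take_append_drop (2*m) (L.drop i)]
    congr 1
    rw [List.drop_drop]
  have hL'split : L' = L.take i ++ ((List.range (2*m)).map (fun j => c + 1 - j) ++ L.drop (i + 2*m)) := by
    conv_lhs => rw [← List.take_append_drop i L']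
    rw [hTake]
    congr 1
    rw [← hMidL']
    conv_lhs => rw [← List.take_append_drop (2*m) (L'.drop i)]
    rw [List.drop_drop, hDrop]
  -- multiset identities
  set T : Multiset ℕ := ↑(L.take i) + ↑(L.drop (i + 2*m)) with hT
  set E : Multiset ℕ := ↑((List.range m).map (fun t => c - 2*t)) with hE
  set R : Multiset ℕ := ↑((List.range m).map (fun t => c - (2*t+1))) with hR
  set A : Multiset ℕ := ↑((List.range m).map (fun t => c + 1 - 2*t)) with hA
  have hEeq : ((List.range m).map (fun t => c + 1 - (2*t+1)) : Multiset ℕ) = E := by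
    rw [hE]
    congr 1
    apply List.map_congr_left
    intro t _
    omega
  have mL : (L : Multiset ℕ) = (T + E) + R := by
    conv_lhs => rw [hLsplit]
    simp only [← Multiset.coe_add, split_block, hT, hE, hR]
    abel
  have mL' : (L' : Multiset ℕ) = (T + E) + A := by
    conv_lhs => rw [hL'split]
    simp only [← Multiset.coe_add, split_block (m := m) (c := c + 1), hEeq, hT, hA]
    abel
  have part1 : (L' : Multiset ℕ) = (L : Multiset ℕ) - R + A := by
    rw [mL, mL', add_tsub_cancel_right]
  refine ⟨part1, ?_, ?_⟩
  · intro hodd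
    have hq : ∀ (s : List ℕ), ((s.filter (fun x => decide (x % 2 = 1)) : List ℕ) : Multiset ℕ)
        = Multiset.filter (fun x => x % 2 = 1) (↑s) := by intro s; simp
    rw [hq, hq, part1, Multiset.filter_add, Multiset.filter_sub]
    have hRf : Multiset.filter (fun x => x % 2 = 1) R = 0 := by
      rw [Multiset.filter_eq_nil]
      intro a ha
      simp only [hR, Multiset.mem_coe, List.mem_map, List.mem_range] at ha
      obtain ⟨t, ht, rfl⟩ := ha
      omega
    have hAf : Multiset.filter (fun x => x % 2 = 1) A = 0 := by
      rw [Multiset.filter_eq_nil]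
      intro a ha
      simp only [hA, Multiset.mem_coe, List.mem_map, List.mem_range] at ha
      obtain ⟨t, ht, rfl⟩ := ha
      omega
    rw [hRf, hAf, tsub_zero, add_zero]
  · intro heven
    have hq : ∀ (s : List ℕ), ((s.filter (fun x => decide (x % 2 = 0)) : List ℕ) : Multiset ℕ)
        = Multiset.filter (fun x => x % 2 = 0) (↑s) := by intro s; simp
    rw [hq, hq, part1, Multiset.filter_add, Multiset.filter_sub]
    have hRf : Multiset.filter (fun x => x % 2 = 0) R = 0 := by
      rw [Multiset.filter_eq_nil]
      intro a ha
      simp only [hR, Multiset.mem_coe, List.mem_map, List.mem_range] at ha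
      obtain ⟨t, ht, rfl⟩ := ha
      omega
    have hAf : Multiset.filter (fun x => x % 2 = 0) A = 0 := by
      rw [Multiset.filter_eq_nil]
      intro a ha
      simp only [hA, Multiset.mem_coe, List.mem_map, List.mem_range] at ha
      obtain ⟨t, ht, rfl⟩ := ha
      omega
    rw [hRf, hAf, tsub_zero, add_zero]
end

section
/- (Extended Rule A+B for adding 2·1^{2m}) Let μ = (μ_1 ≥ … ≥ μ_l) be a weakly decreasing sequence of nonnegative integers and let i ≥ 1, m ≥ 1 with i + 2m ≤ l and μ_i = μ_{i+1} = … = μ_{i+2m}. Let μ' be obtained from μ by adding 2 to μ_i and 1 to each of μ_{i+1}, …, μ_{i+2m}, and set s_k = l − k + μ_k and s'_k = l − k + μ'_k. Then the multiset {s'_1, …, s'_l} is obtained from the multiset {s_1, …, s_l} by replacing each of the m + 1 values s_i, s_i − 2, …, s_i − 2m by that value plus 2. In particular, if s_i is odd then the multiset of even values of s' equals that of s while m + 1 odd values each increase by 2; if s_i is even then the multiset of odd values is unchanged while m + 1 even values each increase by 2. -/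
lemma svals_eq (μ : List ℕ) :
    svals μ = (List.range μ.length).map (fun k => μ.length - 1 - k + μ.getD k 0) := by
  apply List.ext_getElem
  · simp [svals]
  · intro n h1 h2
    simp only [svals, List.getElem_mapIdx, List.getElem_map, List.getElem_range]
    rw [List.getD_eq_getElem _ _ (by simpa [svals] using h1)]

lemma key_s9 (m : ℕ) : ∀ c, 2*m ≤ c →
    (Multiset.range (2*m+1)).map (fun t => if t = 0 then c + 2 else c - t + 1)
      + (Multiset.range (m+1)).map (fun t => c - 2*t)
    = (Multiset.range (2*m+1)).map (fun t => c - t)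
      + (Multiset.range (m+1)).map (fun t => c - 2*t + 2) := by
  induction m with
  | zero =>
    intro c hc
    simp only [Multiset.range_succ, Multiset.range_zero, Multiset.map_cons, Multiset.map_zero,
      if_pos rfl, Nat.mul_zero, Nat.sub_zero, if_true]
    exact add_comm _ _
  | succ n ih =>
    intro c hc
    have r1 : Multiset.range (2*(n+1)+1) = (2*n+2) ::ₘ (2*n+1) ::ₘ Multiset.range (2*n+1) := by
      rw [show 2*(n+1)+1 = (2*n+1+1)+1 by ring, Multiset.range_succ, Multiset.range_succ]
    have r2 : Multiset.range (n+1+1) = (n+1) ::ₘ Multiset.range (n+1) := Multiset.range_succ _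
    rw [r1, r2]
    simp only [Multiset.map_cons]
    rw [if_neg (by omega), if_neg (by omega)]
    simp only [← Multiset.singleton_add]
    rw [show c - (2*n+2) + 1 = c - (2*n+1) by omega,
        show c - (2*n+1) + 1 = c - 2*n by omega,
        show c - 2*(n+1) + 2 = c - 2*n by omega,
        show c - 2*(n+1) = c - (2*n+2) by omega]
    have h := ih c (by omega)
    calc ({c - (2*n+1)} : Multiset ℕ) + ({c - 2*n} + Multiset.map (fun t => if t = 0 then c + 2 else c - t + 1) (Multiset.range (2*n+1)))
          + ({c - (2*n+2)} + Multiset.map (fun t => c - 2*t) (Multiset.range (n+1)))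
        = ({c - (2*n+1)} + {c - 2*n} + {c - (2*n+2)}) + (Multiset.map (fun t => if t = 0 then c + 2 else c - t + 1) (Multiset.range (2*n+1)) + Multiset.map (fun t => c - 2*t) (Multiset.range (n+1))) := by abel
      _ = ({c - (2*n+1)} + {c - 2*n} + {c - (2*n+2)}) + (Multiset.map (fun t => c - t) (Multiset.range (2*n+1)) + Multiset.map (fun t => c - 2*t + 2) (Multiset.range (n+1))) := by rw [h]
      _ = {c - (2*n+2)} + ({c - (2*n+1)} + Multiset.map (fun t => c - t) (Multiset.range (2*n+1))) + ({c - 2*n} + Multiset.map (fun t => c - 2*t + 2) (Multiset.range (n+1))) := by abel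

section Main

variable (μ : List ℕ)

-- main auxiliary lemma: the additive (permutation) form of the statement
lemma mainAdd (hsort : μ.Pairwise (· ≥ ·)) (i m : ℕ)
    (hm : 1 ≤ m) (hle : i + 2 * m < μ.length)
    (heq : ∀ k, i ≤ k → k ≤ i + 2 * m → μ.getD k 0 = μ.getD i 0)
    (μ' : List ℕ)
    (hμ' : μ' = μ.mapIdx (fun k a =>
        if k = i then a + 2 else if i < k ∧ k ≤ i + 2 * m then a + 1 else a)) :
    ((svals μ' : Multiset ℕ)
      + (((List.range (m + 1)).map (fun t => (svals μ).getD i 0 - 2 * t)) : Multiset ℕ))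
    = ((svals μ : Multiset ℕ)
      + (((List.range (m + 1)).map (fun t => (svals μ).getD i 0 - 2 * t + 2)) : Multiset ℕ)) := by
  classical
  set l := μ.length with hldef
  have hlen : μ'.length = l := by rw [hμ']; simp [hldef]
  have hget : ∀ k, k < l → μ'.getD k 0 =
      if k = i then μ.getD k 0 + 2 else if i < k ∧ k ≤ i + 2 * m then μ.getD k 0 + 1
      else μ.getD k 0 := by
    intro k hk
    rw [List.getD_eq_getElem _ _ (by omega : k < μ'.length), List.getD_eq_getElem _ _ hk]
    subst hμ'
    rw [List.getElem_mapIdx]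
  set sfun : ℕ → ℕ := fun k => l - 1 - k + μ.getD k 0 with hsfun
  have hsv : svals μ = (List.range l).map sfun := svals_eq μ
  have hsv' : svals μ' = (List.range l).map (fun k => l - 1 - k + μ'.getD k 0) := by
    rw [svals_eq μ', hlen]
  have hci : (svals μ).getD i 0 = sfun i := by
    rw [hsv, List.getD_eq_getElem _ _ (by simpa using (by omega : i < l))]
    simp
  set c := sfun i with hcdef
  have hcval : c = l - 1 - i + μ.getD i 0 := rfl
  have hc2m : 2 * m ≤ c := by omega
  have hmid : ∀ t, t ≤ 2*m → sfun (i+t) = c - t := by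
    intro t ht
    have h1 := heq (i+t) (by omega) (by omega)
    have h2 : sfun (i+t) = l - 1 - (i+t) + μ.getD i 0 := by
      simp only [hsfun]; rw [h1]
    omega
  have hmid' : ∀ t, t ≤ 2*m →
      l - 1 - (i+t) + μ'.getD (i+t) 0 = if t = 0 then c + 2 else c - t + 1 := by
    intro t ht
    rw [hget (i+t) (by omega)]
    rcases Nat.eq_zero_or_pos t with h0 | h0
    · subst h0
      simp only [Nat.add_zero, if_pos rfl, if_true]
      omega
    · rw [if_neg (by omega), if_pos (show i < i+t ∧ i+t ≤ i + 2*m by omega),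
        if_neg (by omega), heq (i+t) (by omega) (by omega)]
      omega
  have hout : ∀ k, k < l → (k < i ∨ i + 2*m < k) → l - 1 - k + μ'.getD k 0 = sfun k := by
    intro k hk hko
    rw [hget k hk, if_neg (by omega), if_neg (by omega)]
  -- range decomposition
  set r := l - (i + 2*m + 1) with hrdef
  have hl : l = i + (2*m+1) + r := by omega
  have hrange : List.range l
      = List.range i ++ (List.range (2*m+1)).map (i + ·)
        ++ (List.range r).map ((i + (2*m+1)) + ·) := by
    rw [hl, List.range_add, List.range_add]
  -- the three pieces
  have expand : ∀ f : ℕ → ℕ, ((List.range l).map f : Multiset ℕ)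
      = ((List.range i).map f : Multiset ℕ)
        + ((List.range (2*m+1)).map (fun t => f (i + t)) : Multiset ℕ)
        + ((List.range r).map (fun t => f (i + (2*m+1) + t)) : Multiset ℕ) := by
    intro f
    rw [hrange]
    simp [List.map_map, Function.comp_def]
  rw [hci, hsv, hsv', expand, expand]
  have hA : (List.range i).map (fun k => l - 1 - k + μ'.getD k 0) = (List.range i).map sfun := by
    apply List.map_congr_left
    intro k hk
    rw [List.mem_range] at hk
    exact hout k (by omega) (Or.inl hk)
  have hB : (List.range r).map (fun t => l - 1 - (i + (2*m+1) + t) + μ'.getD (i + (2*m+1) + t) 0)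
      = (List.range r).map (fun t => sfun (i + (2*m+1) + t)) := by
    apply List.map_congr_left
    intro k hk
    rw [List.mem_range] at hk
    exact hout _ (by omega) (Or.inr (by omega))
  have hM' : (List.range (2*m+1)).map (fun t => l - 1 - (i + t) + μ'.getD (i + t) 0)
      = (List.range (2*m+1)).map (fun t => if t = 0 then c + 2 else c - t + 1) := by
    apply List.map_congr_left
    intro t ht
    rw [List.mem_range] at ht
    exact hmid' t (by omega)
  have hM : (List.range (2*m+1)).map (fun t => sfun (i + t))
      = (List.range (2*m+1)).map (fun t => c - t) := by
    apply List.map_congr_left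
    intro t ht
    rw [List.mem_range] at ht
    exact hmid t (by omega)
  rw [hA, hB, hM', hM]
  have hk := key_s9 m c hc2m
  have coe_range_map : ∀ (n : ℕ) (f : ℕ → ℕ),
      ((List.range n).map f : Multiset ℕ) = (Multiset.range n).map f := by
    intro n f
    rfl
  rw [coe_range_map, coe_range_map, coe_range_map (m+1), coe_range_map (m+1)]
  calc ((List.range i).map sfun : Multiset ℕ)
        + (Multiset.range (2*m+1)).map (fun t => if t = 0 then c + 2 else c - t + 1)
        + ((List.range r).map (fun t => sfun (i + (2*m+1) + t)) : Multiset ℕ)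
        + (Multiset.range (m+1)).map (fun t => c - 2*t)
      = (((List.range i).map sfun : Multiset ℕ)
          + ((List.range r).map (fun t => sfun (i + (2*m+1) + t)) : Multiset ℕ))
        + ((Multiset.range (2*m+1)).map (fun t => if t = 0 then c + 2 else c - t + 1)
          + (Multiset.range (m+1)).map (fun t => c - 2*t)) := by abel
    _ = (((List.range i).map sfun : Multiset ℕ)
          + ((List.range r).map (fun t => sfun (i + (2*m+1) + t)) : Multiset ℕ))
        + ((Multiset.range (2*m+1)).map (fun t => c - t)
          + (Multiset.range (m+1)).map (fun t => c - 2*t + 2)) := by rw [hk]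
    _ = ((List.range i).map sfun : Multiset ℕ)
        + (Multiset.range (2*m+1)).map (fun t => c - t)
        + ((List.range r).map (fun t => sfun (i + (2*m+1) + t)) : Multiset ℕ)
        + (Multiset.range (m+1)).map (fun t => c - 2*t + 2) := by abel

end Main

lemma getD_svals (μ : List ℕ) (i : ℕ) (hi : i < μ.length) :
    (svals μ).getD i 0 = μ.length - 1 - i + μ.getD i 0 := by
  rw [svals_eq, List.getD_eq_getElem _ _ (by simpa using hi)]
  simp

lemma remLe (μ : List ℕ) (i m : ℕ) (hle : i + 2 * m < μ.length)
    (heq : ∀ k, i ≤ k → k ≤ i + 2 * m → μ.getD k 0 = μ.getD i 0) :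
    (((List.range (m + 1)).map (fun t => (svals μ).getD i 0 - 2 * t)) : Multiset ℕ)
      ≤ (svals μ : Multiset ℕ) := by
  have hci := getD_svals μ i (by omega)
  have hlist : (List.range (m+1)).map (fun t => (svals μ).getD i 0 - 2*t)
      = ((List.range (m+1)).map (fun t => i + 2*t)).map
          (fun k => μ.length - 1 - k + μ.getD k 0) := by
    rw [List.map_map]
    apply List.map_congr_left
    intro t ht
    rw [List.mem_range] at ht
    have h1 := heq (i + 2*t) (by omega) (by omega)
    simp only [Function.comp_apply]
    rw [h1]
    omega
  rw [hlist, svals_eq]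
  rw [show (↑((List.map (fun t => i + 2*t) (List.range (m+1))).map (fun k => μ.length - 1 - k + μ.getD k 0)) : Multiset ℕ) = Multiset.map (fun k => μ.length - 1 - k + μ.getD k 0) ↑(List.map (fun t => i + 2*t) (List.range (m+1))) from (Multiset.map_coe _ _).symm,
      show (↑((List.range μ.length).map (fun k => μ.length - 1 - k + μ.getD k 0)) : Multiset ℕ) = Multiset.map (fun k => μ.length - 1 - k + μ.getD k 0) ↑(List.range μ.length) from (Multiset.map_coe _ _).symm]
  apply Multiset.map_le_map
  rw [Multiset.le_iff_subset]
  · intro x hx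
    simp only [Multiset.mem_coe, List.mem_map, List.mem_range] at hx ⊢
    obtain ⟨t, ht, rfl⟩ := hx
    omega
  · have hinj : Function.Injective (fun t : ℕ => i + 2*t) := by
      intro a b h
      simp only [] at h
      omega
    exact Multiset.coe_nodup.mpr ((List.nodup_range).map hinj)

/-- **Extended Rule A+B** (adding `2·1^{2m}`).  Let `μ` be weakly decreasing
with `2m + 1` equal consecutive parts `μ_i = … = μ_{i+2m}` (0-based indices,
`i + 2m < l`), and let `μ'` add `2` to `μ_i` and `1` to each of
`μ_{i+1}, …, μ_{i+2m}`.  Then the multiset of values `s'_k` is obtained from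
the multiset of values `s_k` by replacing each of the `m + 1` values
`s_i, s_i - 2, …, s_i - 2m` by that value plus 2.  In particular, if `s_i`
is odd the multiset of even values is unchanged, and if `s_i` is even the
multiset of odd values is unchanged. -/
theorem extendedRuleAB (μ : List ℕ) (hsort : μ.Pairwise (· ≥ ·)) (i m : ℕ)
    (hm : 1 ≤ m) (hle : i + 2 * m < μ.length)
    (heq : ∀ k, i ≤ k → k ≤ i + 2 * m → μ.getD k 0 = μ.getD i 0) :
    ∀ μ' : List ℕ,
      μ' = μ.mapIdx (fun k a =>
        if k = i then a + 2 else if i < k ∧ k ≤ i + 2 * m then a + 1 else a) →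
    ((svals μ' : Multiset ℕ) =
      (svals μ : Multiset ℕ)
        - (((List.range (m + 1)).map (fun t => (svals μ).getD i 0 - 2 * t)) : Multiset ℕ)
        + (((List.range (m + 1)).map (fun t => (svals μ).getD i 0 - 2 * t + 2)) : Multiset ℕ)) ∧
    (((svals μ).getD i 0) % 2 = 1 →
      (((svals μ').filter (fun x => decide (x % 2 = 0))) : Multiset ℕ)
        = (((svals μ).filter (fun x => decide (x % 2 = 0))) : Multiset ℕ)) ∧
    (((svals μ).getD i 0) % 2 = 0 →
      (((svals μ').filter (fun x => decide (x % 2 = 1))) : Multiset ℕ)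
        = (((svals μ).filter (fun x => decide (x % 2 = 1))) : Multiset ℕ)) := by
  intro μ' hμ'
  have H := mainAdd μ hsort i m hm hle heq μ' hμ'
  have hRem := remLe μ i m hle heq
  have hci := getD_svals μ i (by omega)
  have hc2m : 2 * m ≤ (svals μ).getD i 0 := by omega
  set c := (svals μ).getD i 0 with hcdef
  have hperm : (svals μ' ++ (List.range (m+1)).map (fun t => c - 2*t)).Perm
      (svals μ ++ (List.range (m+1)).map (fun t => c - 2*t + 2)) := by
    apply Multiset.coe_eq_coe.mp
    exact H
  refine ⟨?_, ?_, ?_⟩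
  · rw [tsub_add_eq_add_tsub hRem, ← H, add_tsub_cancel_right]
  · intro hodd
    have hf := hperm.filter (fun x => decide (x % 2 = 0))
    rw [List.filter_append, List.filter_append,
      show ((List.range (m+1)).map (fun t => c - 2*t)).filter (fun x => decide (x % 2 = 0)) = []
        from List.filter_eq_nil_iff.mpr (by
          intro a ha
          simp only [List.mem_map, List.mem_range] at ha
          obtain ⟨t, ht, rfl⟩ := ha
          simp only [decide_eq_true_eq]
          omega),
      show ((List.range (m+1)).map (fun t => c - 2*t + 2)).filter (fun x => decide (x % 2 = 0)) = []
        from List.filter_eq_nil_iff.mpr (by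
          intro a ha
          simp only [List.mem_map, List.mem_range] at ha
          obtain ⟨t, ht, rfl⟩ := ha
          simp only [decide_eq_true_eq]
          omega),
      List.append_nil, List.append_nil] at hf
    exact Multiset.coe_eq_coe.mpr hf
  · intro heven
    have hf := hperm.filter (fun x => decide (x % 2 = 1))
    rw [List.filter_append, List.filter_append,
      show ((List.range (m+1)).map (fun t => c - 2*t)).filter (fun x => decide (x % 2 = 1)) = []
        from List.filter_eq_nil_iff.mpr (by
          intro a ha
          simp only [List.mem_map, List.mem_range] at ha
          obtain ⟨t, ht, rfl⟩ := ha
          simp only [decide_eq_true_eq]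
          omega),
      show ((List.range (m+1)).map (fun t => c - 2*t + 2)).filter (fun x => decide (x % 2 = 1)) = []
        from List.filter_eq_nil_iff.mpr (by
          intro a ha
          simp only [List.mem_map, List.mem_range] at ha
          obtain ⟨t, ht, rfl⟩ := ha
          simp only [decide_eq_true_eq]
          omega),
      List.append_nil, List.append_nil] at hf
    exact Multiset.coe_eq_coe.mpr hf
end

section
/- (Closed formula, C_n) Let λ be a rigid C_n partition with length l; let l' = l if l is even and l' = l + 1 if l is odd, let M = l'/2, and let (α_1, …, α_M; β_1, …, β_M) be the symbol of λ in the C_n theory. Then for every 1 ≤ p ≤ M: α_{M+1−p} = #{ i : 1 ≤ i ≤ λ_1, and either (λ^T_i is odd, i is odd, and (λ^T_i + 1)/2 ≥ p) or (λ^T_i is even, i is even, and λ^T_i/2 ≥ p) }; and β_{M+1−p} = #{ i : 1 ≤ i ≤ λ_1, and either (λ^T_i is even, i is odd, and λ^T_i/2 ≥ p) or (λ^T_i is odd, i is even, and (λ^T_i − 1)/2 ≥ p) }. -/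
/-- The row `λ^T_i` of the transposed Young diagram: the number of parts
of `lam` that are `≥ i`. -/
def transposeRow (lam : List ℕ) (i : ℕ) : ℕ :=
  lam.countP (fun a => decide (i ≤ a))

namespace ClosedCn

/-- bead positions -/
def sfun (μ : List ℕ) (k : ℕ) : ℕ := μ.length - 1 - k + μ.getD k 0

/-- gap positions -/
def tfun (μ : List ℕ) (i : ℕ) : ℕ := μ.length - 1 + i - transposeRow μ i

lemma countP_eq_card (l : List ℕ) (p : ℕ → Bool) :
    l.countP p = ((Finset.range l.length).filter (fun i => p (l.getD i 0) = true)).card := by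
  induction l using List.reverseRecOn with
  | nil => simp
  | append_singleton l a ih =>
      rw [List.countP_append, List.length_append, List.countP_singleton, ih]
      simp only [List.length_singleton, Finset.range_add_one, Finset.filter_insert]
      have h2 : Finset.filter (fun i => p ((l ++ [a]).getD i 0) = true) (Finset.range l.length)
          = Finset.filter (fun i => p (l.getD i 0) = true) (Finset.range l.length) := by
        apply Finset.filter_congr
        intro i hi
        rw [List.getD_append _ _ _ _ (Finset.mem_range.mp hi)]
      have h3 : (l ++ [a]).getD l.length 0 = a := by
        rw [List.getD_append_right _ _ _ _ le_rfl]; simp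
      rw [h3, h2]
      by_cases hpa : p a = true
      · rw [if_pos hpa, if_pos hpa, Finset.card_insert_of_notMem (by simp)]
      · rw [if_neg hpa, if_neg hpa]; simp

lemma card_Ico_parity (a b r : ℕ) (hab : a ≤ b) (hr : r ≤ 1) :
    ((Finset.Ico a b).filter (fun k => k % 2 = r)).card
      = (b + 1 - r) / 2 - (a + 1 - r) / 2 := by
  induction b, hab using Nat.le_induction with
  | base => simp
  | succ b hab ih =>
      rw [Nat.Ico_succ_right_eq_insert_Ico hab, Finset.filter_insert]
      by_cases hb : b % 2 = r
      · rw [if_pos hb, Finset.card_insert_of_notMem (by simp), ih]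
        omega
      · rw [if_neg hb, ih]
        omega

section Mu

variable {μ : List ℕ}

lemma sval_getD {k : ℕ} (hk : k < μ.length) : (svals μ).getD k 0 = sfun μ k := by
  have h1 : k < (svals μ).length := by simpa [svals] using hk
  rw [List.getD_eq_getElem _ _ h1]
  simp only [svals, List.getElem_mapIdx]
  rw [sfun, List.getD_eq_getElem _ _ hk]

lemma svals_length : (svals μ).length = μ.length := by simp [svals]

lemma monoD (hs : μ.Pairwise (· ≥ ·)) {k k' : ℕ} (h : k ≤ k') (h' : k' < μ.length) :
    μ.getD k' 0 ≤ μ.getD k 0 := by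
  rcases Nat.eq_or_lt_of_le h with rfl | hlt
  · exact le_rfl
  · have := List.pairwise_iff_getElem.mp hs k k' (lt_trans hlt h') h' hlt
    rw [List.getD_eq_getElem _ _ h', List.getD_eq_getElem _ _ (lt_trans hlt h')]
    exact this

lemma sfun_anti (hs : μ.Pairwise (· ≥ ·)) {k k' : ℕ} (h : k < k') (h' : k' < μ.length) :
    sfun μ k' < sfun μ k := by
  have h1 : μ.getD k' 0 ≤ μ.getD k 0 := monoD hs (le_of_lt h) h'
  unfold sfun
  omega

lemma Tcard (i : ℕ) :
    transposeRow μ i = ((Finset.range μ.length).filter (fun k => i ≤ μ.getD k 0)).card := by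
  rw [transposeRow, countP_eq_card]
  apply congrArg
  apply Finset.filter_congr
  intro k _
  simp

lemma T_le_len (i : ℕ) : transposeRow μ i ≤ μ.length :=
  List.countP_le_length

lemma T_anti {i j : ℕ} (h : i ≤ j) : transposeRow μ j ≤ transposeRow μ i := by
  rw [Tcard, Tcard]
  apply Finset.card_le_card
  intro k hk
  rw [Finset.mem_filter] at *
  exact ⟨hk.1, by omega⟩

lemma Dchar (hs : μ.Pairwise (· ≥ ·)) (i : ℕ) {k : ℕ} (hk : k < μ.length) :
    i ≤ μ.getD k 0 ↔ k < transposeRow μ i := by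
  constructor
  · intro h
    rw [Tcard]
    have : Finset.range (k + 1) ⊆
        (Finset.range μ.length).filter (fun k => i ≤ μ.getD k 0) := by
      intro j hj
      have hj' : j ≤ k := by simpa [Nat.lt_succ_iff] using hj
      exact Finset.mem_filter.mpr ⟨Finset.mem_range.mpr (lt_of_le_of_lt hj' hk),
        le_trans h (monoD hs hj' hk)⟩
    have := Finset.card_le_card this
    simpa using this
  · intro h
    by_contra hc
    push_neg at hc
    have hsub : (Finset.range μ.length).filter (fun k => i ≤ μ.getD k 0) ⊆ Finset.range k := by
      intro j hj
      rw [Finset.mem_filter, Finset.mem_range] at hj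
      rw [Finset.mem_range]
      by_contra hjk
      push_neg at hjk
      exact absurd (le_trans hj.2 (monoD hs hjk hj.1)) (by omega)
    have := Finset.card_le_card hsub
    rw [← Tcard] at this
    simp at this
    omega

lemma trich_lt (hs : μ.Pairwise (· ≥ ·)) {i k : ℕ} (hi : 1 ≤ i) (hk : k < μ.length)
    (h : k < transposeRow μ i) : tfun μ i < sfun μ k := by
  have h1 : i ≤ μ.getD k 0 := (Dchar hs i hk).mpr h
  have h2 := T_le_len (μ := μ) i
  unfold tfun sfun
  omega

lemma trich_gt (hs : μ.Pairwise (· ≥ ·)) {i k : ℕ} (hi : 1 ≤ i) (hk : k < μ.length)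
    (h : transposeRow μ i ≤ k) : sfun μ k < tfun μ i := by
  have h1 : ¬ (i ≤ μ.getD k 0) := by
    intro hc
    have := (Dchar hs i hk).mp hc
    omega
  have h2 := T_le_len (μ := μ) i
  unfold tfun sfun
  omega

lemma tfun_not_bead (hs : μ.Pairwise (· ≥ ·)) {i k : ℕ} (hi : 1 ≤ i) (hk : k < μ.length) :
    sfun μ k ≠ tfun μ i := by
  rcases lt_or_ge k (transposeRow μ i) with h | h
  · exact (ne_of_gt (trich_lt hs hi hk h))
  · exact (ne_of_lt (trich_gt hs hi hk h))

lemma count_eq_sub (hs : μ.Pairwise (· ≥ ·)) (i : ℕ) :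
    μ.count i = transposeRow μ i - transposeRow μ (i + 1) := by
  have hA := T_anti (μ := μ) (i := i) (j := i + 1) (by omega)
  rw [List.count, countP_eq_card]
  have h1 : Finset.filter (fun k => (μ.getD k 0 == i) = true) (Finset.range μ.length)
      = Finset.Ico (transposeRow μ (i+1)) (transposeRow μ i) := by
    ext k
    rw [Finset.mem_filter, Finset.mem_range, Finset.mem_Ico]
    constructor
    · rintro ⟨hk, he⟩
      have he' : μ.getD k 0 = i := by simpa using he
      constructor
      · by_contra hc
        push_neg at hc
        have := (Dchar hs (i+1) hk).mpr hc
        omega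
      · exact (Dchar hs i hk).mp (by omega)
    · rintro ⟨h1, h2⟩
      have hk : k < μ.length := lt_of_lt_of_le h2 (T_le_len i)
      have ha : i ≤ μ.getD k 0 := (Dchar hs i hk).mpr h2
      have hb : ¬ (i + 1 ≤ μ.getD k 0) := by
        intro hc
        have := (Dchar hs (i+1) hk).mp hc
        omega
      exact ⟨hk, by simp only [beq_iff_eq]; omega⟩
  rw [h1, Nat.card_Ico]

lemma zero_T (hs : μ.Pairwise (· ≥ ·)) {i : ℕ} (hi : μ.getD 0 0 < i) :
    transposeRow μ i = 0 := by
  rcases Nat.eq_zero_or_pos μ.length with h0 | h0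
  · have := T_le_len (μ := μ) i; omega
  · by_contra hc
    have hT : 0 < transposeRow μ i := Nat.pos_of_ne_zero hc
    have := (Dchar hs i h0).mpr hT
    omega

lemma Qmain (hs : μ.Pairwise (· ≥ ·)) (hL2 : μ.length % 2 = 0)
    (h4 : ∀ m, m % 2 = 1 → μ.count m % 2 = 0) :
    ∀ i, 1 ≤ i →
      ((Finset.range (transposeRow μ i)).filter (fun k => sfun μ k % 2 = 1)).card
        = (transposeRow μ i + 1) / 2 := by
  suffices h : ∀ d i, 1 ≤ i → μ.getD 0 0 < i + d →
      ((Finset.range (transposeRow μ i)).filter (fun k => sfun μ k % 2 = 1)).card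
        = (transposeRow μ i + 1) / 2 by
    intro i hi
    exact h (μ.getD 0 0 + 1) i hi (by omega)
  intro d
  induction d with
  | zero =>
      intro i hi hlt
      rw [zero_T hs (by omega)]
      simp
  | succ d ih =>
      intro i hi hlt
      by_cases hcase : μ.getD 0 0 < i + d
      · exact ih i hi hcase
      · have hQ := ih (i+1) (by omega) (by omega)
        have hAB : transposeRow μ (i+1) ≤ transposeRow μ i :=
          T_anti (by omega)
        have hBL : transposeRow μ i ≤ μ.length := T_le_len i
        set A := transposeRow μ (i+1) with hA
        set B := transposeRow μ i with hB
        have hsplit : Finset.range B = Finset.range A ∪ Finset.Ico A B := by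
          rw [Finset.range_eq_Ico, Finset.range_eq_Ico]
          exact (Finset.Ico_union_Ico_eq_Ico (Nat.zero_le _) hAB).symm
        have hdisj : Disjoint
            ((Finset.range A).filter (fun k => sfun μ k % 2 = 1))
            ((Finset.Ico A B).filter (fun k => sfun μ k % 2 = 1)) := by
          apply Finset.disjoint_filter_filter
          rw [Finset.range_eq_Ico]
          exact Finset.Ico_disjoint_Ico_consecutive 0 A B
        rw [hsplit, Finset.filter_union, Finset.card_union_of_disjoint hdisj, hQ]
        have hmid : (Finset.Ico A B).filter (fun k => sfun μ k % 2 = 1)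
            = (Finset.Ico A B).filter (fun k => k % 2 = i % 2) := by
          apply Finset.filter_congr
          intro k hk
          rw [Finset.mem_Ico] at hk
          have hkL : k < μ.length := lt_of_lt_of_le hk.2 hBL
          have ha : i ≤ μ.getD k 0 := (Dchar hs i hkL).mpr hk.2
          have hb : ¬ (i + 1 ≤ μ.getD k 0) := by
            intro hc
            have := (Dchar hs (i+1) hkL).mp hc
            omega
          unfold sfun
          constructor <;> intro <;> omega
        rw [hmid, card_Ico_parity A B (i % 2) hAB (by omega)]
        have hcnt : i % 2 = 1 → (B - A) % 2 = 0 := by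
          intro hodd
          have h1 := count_eq_sub hs i
          have h2 := h4 i hodd
          omega
        omega

lemma bead_parity_count (hs : μ.Pairwise (· ≥ ·)) (hL2 : μ.length % 2 = 0)
    (h4 : ∀ m, m % 2 = 1 → μ.count m % 2 = 0)
    (h5 : μ.length ≤ transposeRow μ 1 + 1) {r : ℕ} (hr : r ≤ 1) :
    ((Finset.range μ.length).filter (fun k => sfun μ k % 2 = r)).card = μ.length / 2 := by
  have hQ := Qmain hs hL2 h4 1 le_rfl
  have hT := T_le_len (μ := μ) 1
  set T1 := transposeRow μ 1 with hT1
  have hsplit : Finset.range μ.length = Finset.range T1 ∪ Finset.Ico T1 μ.length := by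
    rw [Finset.range_eq_Ico, Finset.range_eq_Ico]
    exact (Finset.Ico_union_Ico_eq_Ico (Nat.zero_le _) hT).symm
  have hdisj : Disjoint
      ((Finset.range T1).filter (fun k => sfun μ k % 2 = r))
      ((Finset.Ico T1 μ.length).filter (fun k => sfun μ k % 2 = r)) := by
    apply Finset.disjoint_filter_filter
    rw [Finset.range_eq_Ico]
    exact Finset.Ico_disjoint_Ico_consecutive 0 T1 μ.length
  have htail : ∀ k ∈ Finset.Ico T1 μ.length, sfun μ k = 0 := by
    intro k hk
    rw [Finset.mem_Ico] at hk
    have hk2 : k = μ.length - 1 := by omega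
    have hz : ¬ (1 ≤ μ.getD k 0) := by
      intro hc
      have := (Dchar hs 1 (by omega : k < μ.length)).mp hc
      omega
    unfold sfun
    omega
  have hodd1 : ((Finset.range T1).filter (fun k => sfun μ k % 2 = 1)).card = (T1 + 1)/2 := hQ
  have heven1 : ((Finset.range T1).filter (fun k => sfun μ k % 2 = 0)).card = T1 - (T1+1)/2 := by
    have hsum := Finset.card_filter_add_card_filter_not
      (s := Finset.range T1) (p := fun k => sfun μ k % 2 = 1)
    have hco : (Finset.range T1).filter (fun k => ¬ sfun μ k % 2 = 1)
        = (Finset.range T1).filter (fun k => sfun μ k % 2 = 0) := by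
      apply Finset.filter_congr
      intro k _
      constructor <;> intro <;> omega
    rw [hco] at hsum
    rw [Finset.card_range] at hsum
    omega
  have htailcard0 : ((Finset.Ico T1 μ.length).filter (fun k => sfun μ k % 2 = 0)).card
      = μ.length - T1 := by
    rw [Finset.filter_true_of_mem (fun k hk => by rw [htail k hk])]
    exact Nat.card_Ico T1 μ.length
  have htailcard1 : ((Finset.Ico T1 μ.length).filter (fun k => sfun μ k % 2 = 1)).card = 0 := by
    rw [Finset.card_eq_zero, Finset.filter_eq_empty_iff]
    intro k hk
    rw [htail k hk]
    omega
  rw [hsplit, Finset.filter_union, Finset.card_union_of_disjoint hdisj]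
  interval_cases r
  · rw [heven1, htailcard0]
    omega
  · rw [hodd1, htailcard1]
    omega

/-- number of beads of parity `r` strictly above position `x` -/
def Cb (μ : List ℕ) (r x : ℕ) : ℕ :=
  ((Finset.range μ.length).filter (fun k => sfun μ k % 2 = r ∧ x < sfun μ k)).card

lemma Cb_anti (r : ℕ) {x y : ℕ} (h : x ≤ y) : Cb μ r y ≤ Cb μ r x := by
  apply Finset.card_le_card
  intro k hk
  rw [Finset.mem_filter] at *
  exact ⟨hk.1, hk.2.1, by omega⟩

lemma Cb_tfun (hs : μ.Pairwise (· ≥ ·)) (hL2 : μ.length % 2 = 0)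
    (h4 : ∀ m, m % 2 = 1 → μ.count m % 2 = 0) {i : ℕ} (hi : 1 ≤ i)
    {r : ℕ} (hr : r ≤ 1) :
    Cb μ r (tfun μ i) = (transposeRow μ i + r) / 2 := by
  have hTL := T_le_len (μ := μ) i
  have key : (Finset.range μ.length).filter
        (fun k => sfun μ k % 2 = r ∧ tfun μ i < sfun μ k)
      = (Finset.range (transposeRow μ i)).filter (fun k => sfun μ k % 2 = r) := by
    ext k
    simp only [Finset.mem_filter, Finset.mem_range]
    constructor
    · rintro ⟨hkL, hpar, hlt⟩
      refine ⟨?_, hpar⟩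
      by_contra hc
      push_neg at hc
      have := trich_gt hs hi hkL hc
      omega
    · rintro ⟨hkT, hpar⟩
      have hkL : k < μ.length := lt_of_lt_of_le hkT hTL
      exact ⟨hkL, hpar, trich_lt hs hi hkL hkT⟩
  rw [Cb, key]
  have hQ := Qmain hs hL2 h4 i hi
  interval_cases r
  · have hsum := Finset.card_filter_add_card_filter_not
      (s := Finset.range (transposeRow μ i)) (p := fun k => sfun μ k % 2 = 1)
    have hco : (Finset.range (transposeRow μ i)).filter (fun k => ¬ sfun μ k % 2 = 1)
        = (Finset.range (transposeRow μ i)).filter (fun k => sfun μ k % 2 = 0) := by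
      apply Finset.filter_congr
      intro k _
      constructor <;> intro <;> omega
    rw [hco, Finset.card_range, hQ] at hsum
    omega
  · rw [hQ]

lemma tmono (hs : μ.Pairwise (· ≥ ·)) {i j : ℕ} (hi : 1 ≤ i) (hij : i < j) :
    tfun μ i < tfun μ j := by
  have h1 : transposeRow μ j ≤ transposeRow μ i := T_anti (by omega)
  have h2 := T_le_len (μ := μ) i
  unfold tfun
  omega

lemma rev_filter_pairwise (hs : μ.Pairwise (· ≥ ·)) (p : ℕ → Bool) :
    (((svals μ).filter p).reverse).Pairwise (· < ·) := by
  rw [List.pairwise_reverse]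
  apply List.Pairwise.filter
  rw [List.pairwise_iff_getElem]
  intro a b ha hb hab
  rw [svals_length] at ha hb
  have h1 : (svals μ)[a] = sfun μ a := by
    rw [← List.getD_eq_getElem (svals μ) 0 (by rw [svals_length]; exact lt_trans hab hb)]
    exact sval_getD (lt_trans hab hb)
  have h2 : (svals μ)[b] = sfun μ b := by
    rw [← List.getD_eq_getElem (svals μ) 0 (by rw [svals_length]; exact hb)]
    exact sval_getD hb
  rw [h1, h2]
  exact sfun_anti hs hab hb

lemma sorted_countP (o : List ℕ) (ho : o.Pairwise (· < ·)) {j : ℕ} (hj : j < o.length) :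
    o.countP (fun x => decide (o.getD j 0 ≤ x)) = o.length - j := by
  rw [countP_eq_card]
  have key : (Finset.range o.length).filter
        (fun k => (decide (o.getD j 0 ≤ o.getD k 0)) = true)
      = Finset.Ico j o.length := by
    ext k
    simp only [Finset.mem_filter, Finset.mem_range, Finset.mem_Ico, decide_eq_true_eq]
    constructor
    · rintro ⟨hk, hle⟩
      refine ⟨?_, hk⟩
      by_contra hc
      push_neg at hc
      have := List.pairwise_iff_getElem.mp ho k j hk hj hc
      rw [List.getD_eq_getElem _ _ hk, List.getD_eq_getElem _ _ hj] at hle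
      omega
    · rintro ⟨hjk, hk⟩
      refine ⟨hk, ?_⟩
      rcases Nat.eq_or_lt_of_le hjk with rfl | hlt
      · exact le_rfl
      · have := List.pairwise_iff_getElem.mp ho j k hj hk hlt
        rw [List.getD_eq_getElem _ _ hk, List.getD_eq_getElem _ _ hj]
        omega
  rw [key, Nat.card_Ico]

lemma master (M p r : ℕ) (hs : μ.Pairwise (· ≥ ·))
    (hL2 : μ.length = 2 * M)
    (h4 : ∀ m, m % 2 = 1 → μ.count m % 2 = 0)
    (h5 : μ.length ≤ transposeRow μ 1 + 1)
    (hp1 : 1 ≤ p) (hpM : p ≤ M) (hr : r ≤ 1) :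
    ((svals μ).filter (fun x => decide (x % 2 = r))).length = M ∧
    (((svals μ).filter (fun x => decide (x % 2 = r))).reverse.getD (M - p) 0) % 2 = r ∧
    ((((svals μ).filter (fun x => decide (x % 2 = r))).reverse.getD (M - p) 0 + 1 - r) / 2 - (M - p)
      = ((Finset.Icc 1 (μ.getD 0 0)).filter
          (fun i => tfun μ i % 2 = r ∧ p ≤ (transposeRow μ i + r) / 2)).card) := by
  have hL2' : μ.length % 2 = 0 := by omega
  set o := ((svals μ).filter (fun x => decide (x % 2 = r))).reverse with ho
  have hbead : ((Finset.range μ.length).filter (fun k => sfun μ k % 2 = r)).card = M := by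
    rw [bead_parity_count hs hL2' h4 h5 hr]; omega
  have holen : o.length = M := by
    have e0 : o.length = (svals μ).countP (fun x => decide (x % 2 = r)) := by
      rw [ho, List.length_reverse, ← List.countP_eq_length_filter]
    rw [e0, countP_eq_card, svals_length, ← hbead]
    apply congrArg
    apply Finset.filter_congr
    intro k hk
    rw [sval_getD (Finset.mem_range.mp hk)]
    simp
  have hidx : M - p < o.length := by omega
  set v := o.getD (M - p) 0 with hv
  have hvmem : v ∈ o := by
    rw [hv, List.getD_eq_getElem _ _ hidx]
    exact List.getElem_mem _
  have hvpar : v % 2 = r := by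
    have := List.of_mem_filter (List.mem_reverse.mp hvmem)
    simpa using this
  have hvbead : ∃ k0, k0 < μ.length ∧ sfun μ k0 = v := by
    have hv2 : v ∈ svals μ := List.mem_of_mem_filter (List.mem_reverse.mp hvmem)
    rcases List.mem_iff_getElem.mp hv2 with ⟨k0, hk0, hk0e⟩
    have hk0L : k0 < μ.length := by rw [svals_length] at hk0; exact hk0
    refine ⟨k0, hk0L, ?_⟩
    rw [← sval_getD hk0L, List.getD_eq_getElem _ _ hk0]
    exact hk0e
  obtain ⟨k0, hk0L, hk0v⟩ := hvbead
  have hP1 : ((Finset.range μ.length).filter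
      (fun k => sfun μ k % 2 = r ∧ v ≤ sfun μ k)).card = p := by
    have hcp := sorted_countP o (by rw [ho]; exact rev_filter_pairwise hs _) hidx
    rw [holen, ← hv] at hcp
    have e1 : o.countP (fun x => decide (v ≤ x))
        = (svals μ).countP (fun x => decide (v ≤ x) && decide (x % 2 = r)) := by
      rw [ho, List.countP_reverse, List.countP_filter]
    have e2 : (svals μ).countP (fun x => decide (v ≤ x) && decide (x % 2 = r))
        = ((Finset.range μ.length).filter
            (fun k => sfun μ k % 2 = r ∧ v ≤ sfun μ k)).card := by
      rw [countP_eq_card, svals_length]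
      apply congrArg
      apply Finset.filter_congr
      intro k hk
      rw [sval_getD (Finset.mem_range.mp hk)]
      constructor
      · intro h
        simp only [Bool.and_eq_true, decide_eq_true_eq] at h
        exact ⟨h.2, h.1⟩
      · intro h
        simp only [Bool.and_eq_true, decide_eq_true_eq]
        exact ⟨h.2, h.1⟩
    rw [e1, e2] at hcp
    omega
  have hP2 : ((Finset.range μ.length).filter
      (fun k => sfun μ k % 2 = r ∧ v < sfun μ k)).card = p - 1 := by
    have hsplit : (Finset.range μ.length).filter (fun k => sfun μ k % 2 = r ∧ v ≤ sfun μ k)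
        = (Finset.range μ.length).filter (fun k => sfun μ k % 2 = r ∧ v < sfun μ k)
          ∪ (Finset.range μ.length).filter (fun k => sfun μ k % 2 = r ∧ sfun μ k = v) := by
      rw [← Finset.filter_or]
      apply Finset.filter_congr
      intro k _
      constructor <;> intro h <;> omega
    have hdisj : Disjoint
        ((Finset.range μ.length).filter (fun k => sfun μ k % 2 = r ∧ v < sfun μ k))
        ((Finset.range μ.length).filter (fun k => sfun μ k % 2 = r ∧ sfun μ k = v)) := by
      rw [Finset.disjoint_left]
      intro a ha hb
      rw [Finset.mem_filter] at ha hb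
      omega
    have hone : (Finset.range μ.length).filter
        (fun k => sfun μ k % 2 = r ∧ sfun μ k = v) = {k0} := by
      ext k
      simp only [Finset.mem_filter, Finset.mem_range, Finset.mem_singleton]
      constructor
      · rintro ⟨hkL, _, hkv⟩
        by_contra hne
        rcases Nat.lt_or_ge k k0 with h | h
        · have := sfun_anti hs h hk0L; omega
        · have hgt : k0 < k := by omega
          have := sfun_anti hs hgt hkL; omega
      · rintro rfl
        exact ⟨hk0L, by rw [hk0v]; exact hvpar, hk0v⟩
    rw [hsplit, Finset.card_union_of_disjoint hdisj, hone, Finset.card_singleton] at hP1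
    omega
  have hCbv : Cb μ r v = p - 1 := hP2
  have hCbv1 : 1 ≤ v → Cb μ r (v - 1) = p := by
    intro hv1
    rw [Cb, ← hP1]
    apply congrArg
    apply Finset.filter_congr
    intro k _
    constructor <;> intro h <;> exact ⟨h.1, by omega⟩
  have hGconv : (Finset.Icc 1 (μ.getD 0 0)).filter
        (fun i => tfun μ i % 2 = r ∧ p ≤ (transposeRow μ i + r) / 2)
      = (Finset.Icc 1 (μ.getD 0 0)).filter
        (fun i => tfun μ i % 2 = r ∧ tfun μ i < v) := by
    apply Finset.filter_congr
    intro i hi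
    rw [Finset.mem_Icc] at hi
    have hCbt := Cb_tfun hs hL2' h4 hi.1 hr
    constructor
    · rintro ⟨hpar, hple⟩
      refine ⟨hpar, ?_⟩
      by_contra hc
      push_neg at hc
      have := Cb_anti (μ := μ) r hc
      omega
    · rintro ⟨hpar, hlt⟩
      refine ⟨hpar, ?_⟩
      have hv1 : 1 ≤ v := by omega
      have h1 := hCbv1 hv1
      have h2 := Cb_anti (μ := μ) r (show tfun μ i ≤ v - 1 by omega)
      omega
  rw [hGconv]
  set G := (Finset.Icc 1 (μ.getD 0 0)).filter
      (fun i => tfun μ i % 2 = r ∧ tfun μ i < v) with hG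
  have hbelow : ((Finset.range μ.length).filter
      (fun k => sfun μ k % 2 = r ∧ sfun μ k < v)).card = M - p := by
    have hsum := Finset.card_filter_add_card_filter_not
      (s := (Finset.range μ.length).filter (fun k => sfun μ k % 2 = r))
      (p := fun k => sfun μ k < v)
    rw [Finset.filter_filter, Finset.filter_filter, hbead] at hsum
    have hco : (Finset.range μ.length).filter (fun k => sfun μ k % 2 = r ∧ ¬ sfun μ k < v)
        = (Finset.range μ.length).filter (fun k => sfun μ k % 2 = r ∧ v ≤ sfun μ k) := by
      apply Finset.filter_congr
      intro k _
      constructor <;> intro h <;> exact ⟨h.1, by omega⟩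
    rw [hco, hP1] at hsum
    omega
  have hbeadx : ((Finset.range v).filter (fun x => x % 2 = r ∧ x ∈ svals μ)).card
      = M - p := by
    rw [← hbelow]
    symm
    apply Finset.card_bij (fun k _ => sfun μ k)
    · intro k hk
      rw [Finset.mem_filter, Finset.mem_range] at hk
      obtain ⟨hkL, hpar, hlt⟩ := hk
      rw [Finset.mem_filter, Finset.mem_range]
      refine ⟨hlt, hpar, ?_⟩
      rw [← sval_getD hkL, List.getD_eq_getElem _ _ (by rw [svals_length]; exact hkL)]
      exact List.getElem_mem _
    · intro a ha b hb hab
      rw [Finset.mem_filter, Finset.mem_range] at ha hb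
      by_contra hne
      rcases Nat.lt_or_ge a b with h | h
      · have := sfun_anti hs h hb.1; omega
      · have hgt : b < a := by omega
        have := sfun_anti hs hgt ha.1; omega
    · intro x hx
      rw [Finset.mem_filter, Finset.mem_range] at hx
      obtain ⟨hxv, hxpar, hxmem⟩ := hx
      rcases List.mem_iff_getElem.mp hxmem with ⟨k, hk, hke⟩
      have hkL : k < μ.length := by rw [svals_length] at hk; exact hk
      have hsk : sfun μ k = x := by
        rw [← sval_getD hkL, List.getD_eq_getElem _ _ hk]
        exact hke
      exact ⟨k, Finset.mem_filter.mpr ⟨Finset.mem_range.mpr hkL,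
        by rw [hsk]; exact ⟨hxpar, hxv⟩⟩, hsk⟩
  have hgapx : ((Finset.range v).filter (fun x => x % 2 = r ∧ x ∉ svals μ)).card = G.card := by
    symm
    apply Finset.card_bij (fun i _ => tfun μ i)
    · intro i hi
      rw [hG, Finset.mem_filter, Finset.mem_Icc] at hi
      obtain ⟨⟨hi1, hil⟩, hpar, hlt⟩ := hi
      rw [Finset.mem_filter, Finset.mem_range]
      refine ⟨hlt, hpar, ?_⟩
      intro hmem
      rcases List.mem_iff_getElem.mp hmem with ⟨k, hk, hke⟩
      have hkL : k < μ.length := by rw [svals_length] at hk; exact hk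
      have hsk : sfun μ k = tfun μ i := by
        rw [← sval_getD hkL, List.getD_eq_getElem _ _ hk]
        exact hke
      exact tfun_not_bead hs hi1 hkL hsk
    · intro a ha b hb hab
      rw [hG, Finset.mem_filter, Finset.mem_Icc] at ha hb
      by_contra hne
      rcases Nat.lt_or_ge a b with h | h
      · have := tmono hs ha.1.1 h; omega
      · have hgt : b < a := by omega
        have := tmono hs hb.1.1 hgt; omega
    · intro x hx
      rw [Finset.mem_filter, Finset.mem_range] at hx
      obtain ⟨hxv, hxpar, hxmem⟩ := hx
      set F := (Finset.range μ.length).filter (fun k => x < sfun μ k) with hF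
      set c := F.card with hc
      have hinit : ∀ k, k < μ.length → (x < sfun μ k ↔ k < c) := by
        intro k hkL
        constructor
        · intro hlt
          have hsub : Finset.range (k+1) ⊆ F := by
            intro j hj
            rw [Finset.mem_range, Nat.lt_succ_iff] at hj
            rw [hF, Finset.mem_filter, Finset.mem_range]
            have hjL : j < μ.length := by omega
            refine ⟨hjL, ?_⟩
            rcases Nat.eq_or_lt_of_le hj with rfl | hlt2
            · exact hlt
            · have := sfun_anti hs hlt2 hkL; omega
          have := Finset.card_le_card hsub
          rw [Finset.card_range] at this
          omega
        · intro hkc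
          by_contra hc2
          push_neg at hc2
          have hsub : F ⊆ Finset.range k := by
            intro j hj
            rw [hF, Finset.mem_filter, Finset.mem_range] at hj
            rw [Finset.mem_range]
            by_contra hjk
            push_neg at hjk
            have hle : sfun μ j ≤ sfun μ k := by
              rcases Nat.eq_or_lt_of_le hjk with rfl | hlt2
              · exact le_rfl
              · exact le_of_lt (sfun_anti hs hlt2 hj.1)
            omega
          have := Finset.card_le_card hsub
          rw [Finset.card_range] at this
          omega
      have hc1 : 1 ≤ c := by
        have hk0F : k0 ∈ F := by
          rw [hF, Finset.mem_filter, Finset.mem_range]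
          exact ⟨hk0L, by omega⟩
        have := Finset.card_pos.mpr ⟨k0, hk0F⟩
        omega
      have hcL : c ≤ μ.length := by
        have h0 := Finset.card_filter_le (Finset.range μ.length)
          (fun k => x < sfun μ k)
        rw [← hF, Finset.card_range] at h0
        omega
      have hnonbead : ∀ k, k < μ.length → sfun μ k ≠ x := by
        intro k hkL heq
        apply hxmem
        rw [← heq, ← sval_getD hkL,
          List.getD_eq_getElem _ _ (by rw [svals_length]; exact hkL)]
        exact List.getElem_mem _
      have hLxc : μ.length ≤ x + c := by
        have hmap : ∀ a ∈ Finset.Ico c μ.length, sfun μ a ∈ Finset.range x := by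
          intro a ha
          rw [Finset.mem_Ico] at ha
          have h1 : ¬ (x < sfun μ a) := fun hcon => by
            have := (hinit a ha.2).mp hcon; omega
          have h2 := hnonbead a ha.2
          rw [Finset.mem_range]; omega
        have hinj2 : Set.InjOn (sfun μ) (Finset.Ico c μ.length) := by
          intro a ha b hb hab
          simp only [Finset.coe_Ico, Set.mem_Ico] at ha hb
          by_contra hne
          rcases Nat.lt_or_ge a b with h | h
          · have := sfun_anti hs h hb.2; omega
          · have hgt : b < a := by omega
            have := sfun_anti hs hgt ha.2; omega
        have := Finset.card_le_card_of_injOn (sfun μ) hmap hinj2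
        rw [Nat.card_Ico, Finset.card_range] at this
        omega
      have hi1 : 1 ≤ x + 1 + c - μ.length := by omega
      have hTi : transposeRow μ (x + 1 + c - μ.length) = c := by
        rw [Tcard]
        have hfe : (Finset.range μ.length).filter
            (fun k => x + 1 + c - μ.length ≤ μ.getD k 0) = Finset.range c := by
          ext k
          simp only [Finset.mem_filter, Finset.mem_range]
          constructor
          · rintro ⟨hkL, hik⟩
            by_contra hkc
            push_neg at hkc
            have hcLlt : c < μ.length := by omega
            have h1 : μ.getD k 0 ≤ μ.getD c 0 := monoD hs hkc hkL
            have h2 : ¬ (x < sfun μ c) := fun hcon => by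
              have := (hinit c hcLlt).mp hcon; omega
            have h3 := hnonbead c hcLlt
            have h4 : sfun μ c < x := by omega
            unfold sfun at h4
            omega
          · intro hkc
            have hkL : k < μ.length := by omega
            refine ⟨hkL, ?_⟩
            have hcm : c - 1 < μ.length := by omega
            have h1 : μ.getD (c-1) 0 ≤ μ.getD k 0 := monoD hs (by omega) hcm
            have h2 : x < sfun μ (c-1) := (hinit (c-1) hcm).mpr (by omega)
            unfold sfun at h2
            omega
        rw [hfe, Finset.card_range]
      have hti : tfun μ (x + 1 + c - μ.length) = x := by
        rw [tfun, hTi]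
        omega
      have hil : x + 1 + c - μ.length ≤ μ.getD 0 0 := by
        have hcm : c - 1 < μ.length := by omega
        have h1 : μ.getD (c-1) 0 ≤ μ.getD 0 0 := monoD hs (by omega) hcm
        have h2 : x < sfun μ (c-1) := (hinit (c-1) hcm).mpr (by omega)
        unfold sfun at h2
        omega
      refine ⟨x + 1 + c - μ.length, ?_, hti⟩
      rw [hG, Finset.mem_filter, Finset.mem_Icc, hti]
      exact ⟨⟨hi1, hil⟩, hxpar, hxv⟩
  have hxcount : ((Finset.range v).filter (fun x => x % 2 = r)).card = (v + 1 - r) / 2 := by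
    rw [Finset.range_eq_Ico, card_Ico_parity 0 v r (Nat.zero_le v) hr]
    omega
  have hsplitx := Finset.card_filter_add_card_filter_not
    (s := (Finset.range v).filter (fun x => x % 2 = r))
    (p := fun x => x ∈ svals μ)
  rw [Finset.filter_filter, Finset.filter_filter, hxcount, hbeadx, hgapx] at hsplitx
  refine ⟨by rw [← List.length_reverse]; exact holen, hvpar, by omega⟩

end Mu

end ClosedCn

/-- **Closed formula for the symbol, `C_n` theory.**  For a rigid `C_n`
partition `lam` of `2n` with length `l`, padded length `l'` (one extra `0`
appended when `l` is odd) and `M = l'/2`, the symbol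
`(α_1, …, α_M; β_1, …, β_M)` of `lam` in the `C_n` theory satisfies, for
`1 ≤ p ≤ M`: `α_{M+1-p}` equals the number of `1 ≤ i ≤ λ_1` for which either
(`λ^T_i` odd, `i` odd, `(λ^T_i+1)/2 ≥ p`) or (`λ^T_i` even, `i` even,
`λ^T_i/2 ≥ p`); and `β_{M+1-p}` equals the number of `1 ≤ i ≤ λ_1` for which
either (`λ^T_i` even, `i` odd, `λ^T_i/2 ≥ p`) or (`λ^T_i` odd, `i` even,
`(λ^T_i-1)/2 ≥ p`). -/
theorem closed_formula_Cn (n : ℕ) (hn : 0 < n) (lam : List ℕ) (M : ℕ)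
    (hsort : lam.Pairwise (· ≥ ·))
    (hpos : ∀ x ∈ lam, 0 < x)
    (hsum : lam.sum = 2 * n)
    (hCn : ∀ m : ℕ, Odd m → Even (lam.count m))
    (hgap : ∀ i : ℕ, i + 1 < lam.length → lam.getD i 0 ≤ lam.getD (i + 1) 0 + 1)
    (hrig : ∀ m : ℕ, Even m → lam.count m ≠ 2) :
    ∀ lam' : List ℕ, lam' = (if lam.length % 2 = 1 then lam ++ [0] else lam) →
    M = lam'.length / 2 →
    (∀ p : ℕ, 1 ≤ p → p ≤ M →
      (topRow lam').getD (M - p) 0 =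
        ((Finset.Icc 1 (lam.getD 0 0)).filter (fun i =>
          ((transposeRow lam i) % 2 = 1 ∧ i % 2 = 1 ∧
            p ≤ ((transposeRow lam i) + 1) / 2) ∨
          ((transposeRow lam i) % 2 = 0 ∧ i % 2 = 0 ∧
            p ≤ (transposeRow lam i) / 2))).card ∧
      (botRow lam').getD (M - p) 0 =
        ((Finset.Icc 1 (lam.getD 0 0)).filter (fun i =>
          ((transposeRow lam i) % 2 = 0 ∧ i % 2 = 1 ∧
            p ≤ (transposeRow lam i) / 2) ∨
          ((transposeRow lam i) % 2 = 1 ∧ i % 2 = 0 ∧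
            p ≤ ((transposeRow lam i) - 1) / 2))).card) := by
  intro lam' hlam' hM p hp1 hpM
  -- basic facts about lam'
  have hμs : lam'.Pairwise (· ≥ ·) := by
    rw [hlam']
    split
    · exact List.pairwise_append.mpr ⟨hsort, List.pairwise_singleton _ _, fun a _ b hb => by
        simp at hb; omega⟩
    · exact hsort
  have hlen' : lam'.length = lam.length ∨ lam'.length = lam.length + 1 := by
    rw [hlam']
    split
    · right; simp
    · left; rfl
  have hlenpar : lam'.length % 2 = 0 := by
    rw [hlam']
    split
    · rename_i h; simp; omega
    · rename_i h; omega
  have hL2 : lam'.length = 2 * M := by omega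
  have h4 : ∀ m, m % 2 = 1 → lam'.count m % 2 = 0 := by
    intro m hm
    have hcnt : lam'.count m = lam.count m := by
      rw [hlam']
      split
      · rw [List.count_append]
        have : List.count m [0] = 0 := by
          simp [List.count_singleton]
          omega
        omega
      · rfl
    rw [hcnt]
    have := hCn m (by rw [Nat.odd_iff]; exact hm)
    rw [Nat.even_iff] at this
    exact this
  have hposcount : lam.countP (fun a => decide (1 ≤ a)) = lam.length := by
    rw [List.countP_eq_length]
    intro a ha
    simp only [decide_eq_true_eq]
    exact hpos a ha
  have h5 : lam'.length ≤ transposeRow lam' 1 + 1 := by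
    have : transposeRow lam' 1 = lam.length := by
      rw [hlam', transposeRow]
      split
      · rw [List.countP_append, hposcount]
        simp
      · exact hposcount
    omega
  have hT : ∀ i, 1 ≤ i → transposeRow lam i = transposeRow lam' i := by
    intro i hi
    rw [hlam', transposeRow, transposeRow]
    split
    · rw [List.countP_append]
      have : List.countP (fun a => decide (i ≤ a)) [0] = 0 := by
        simp
        omega
      omega
    · rfl
  have hTle : ∀ i, transposeRow lam' i ≤ lam'.length := fun i => ClosedCn.T_le_len i
  have hgetD0 : lam.getD 0 0 = lam'.getD 0 0 := by
    rw [hlam']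
    split
    · rename_i h
      have hl : 0 < lam.length := by omega
      rw [List.getD_append _ _ _ _ hl]
    · rfl
  constructor
  · -- top row
    obtain ⟨hlen, hparv, heq⟩ := ClosedCn.master (μ := lam') M p 1 hμs hL2 h4 h5 hp1 hpM
      (le_refl 1)
    have hltT : M - p < (topRow lam').length := by
      rw [topRow, List.length_mapIdx, oddVals, List.length_reverse, hlen]
      omega
    have hltO : M - p < (oddVals lam').length := by
      rw [oddVals, List.length_reverse, hlen]; omega
    rw [List.getD_eq_getElem _ _ hltT]
    simp only [topRow, List.getElem_mapIdx]
    rw [← List.getD_eq_getElem _ _ hltO]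
    rw [oddVals]
    have hval : ((((svals lam').filter (fun x => decide (x % 2 = 1))).reverse.getD (M-p) 0) - 1) / 2
        = ((((svals lam').filter (fun x => decide (x % 2 = 1))).reverse.getD (M-p) 0) + 1 - 1) / 2 := by
      omega
    rw [hval, heq, ← hgetD0]
    apply congrArg
    apply Finset.filter_congr
    intro i hi
    rw [Finset.mem_Icc] at hi
    rw [hT i hi.1]
    have h1 := hTle i
    unfold ClosedCn.tfun
    omega
  · -- bottom row
    obtain ⟨hlen, hparv, heq⟩ := ClosedCn.master (μ := lam') M p 0 hμs hL2 h4 h5 hp1 hpM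
      (by omega)
    have hltT : M - p < (botRow lam').length := by
      rw [botRow, List.length_mapIdx, evenVals, List.length_reverse, hlen]
      omega
    have hltO : M - p < (evenVals lam').length := by
      rw [evenVals, List.length_reverse, hlen]; omega
    rw [List.getD_eq_getElem _ _ hltT]
    simp only [botRow, List.getElem_mapIdx]
    rw [← List.getD_eq_getElem _ _ hltO]
    rw [evenVals]
    have hval : ((((svals lam').filter (fun x => decide (x % 2 = 0))).reverse.getD (M-p) 0)) / 2
        = ((((svals lam').filter (fun x => decide (x % 2 = 0))).reverse.getD (M-p) 0) + 1 - 0) / 2 := by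
      omega
    rw [hval, heq, ← hgetD0]
    apply congrArg
    apply Finset.filter_congr
    intro i hi
    rw [Finset.mem_Icc] at hi
    rw [hT i hi.1]
    have h1 := hTle i
    unfold ClosedCn.tfun
    omega
end

section
/- (Closed formula, D_n) Let λ be a rigid D_n partition with length l, so l is even; let M = l/2, and let (α_1, …, α_M; β_1, …, β_{M+1}) be the symbol of λ in the D_n theory. Then for every 1 ≤ p ≤ M: α_{M+1−p} = #{ i : 1 ≤ i ≤ λ_1, and either (λ^T_i is odd, i is even, and (λ^T_i + 1)/2 ≥ p) or (λ^T_i is even, i is odd, and λ^T_i/2 ≥ p) }; and for every 1 ≤ p ≤ M+1: β_{M+2−p} = #{ i : 1 ≤ i ≤ λ_1, and either (λ^T_i is even, i is even, and λ^T_i/2 ≥ p) or (λ^T_i is odd, i is odd, and (λ^T_i − 1)/2 ≥ p) }. -/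
namespace ClosedDn

/- ### Elementary counting lemmas -/

lemma card_odd_range (t : ℕ) :
    ((Finset.range t).filter (fun j => j % 2 = 1)).card = t / 2 := by
  induction t with
  | zero => simp
  | succ t ih =>
    rw [Finset.range_add_one, Finset.filter_insert]
    by_cases h : t % 2 = 1
    · rw [if_pos h, Finset.card_insert_of_notMem (by simp), ih]; omega
    · rw [if_neg h, ih]; omega

lemma card_even_range (t : ℕ) :
    ((Finset.range t).filter (fun j => j % 2 = 0)).card = (t + 1) / 2 := by
  induction t with
  | zero => simp
  | succ t ih =>
    rw [Finset.range_add_one, Finset.filter_insert]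
    by_cases h : t % 2 = 0
    · rw [if_pos h, Finset.card_insert_of_notMem (by simp), ih]; omega
    · rw [if_neg h, ih]; omega

lemma filter_range_split (a b : ℕ) (h : a ≤ b) (q : ℕ → Prop) [DecidablePred q] :
    ((Finset.range b).filter q).card =
      ((Finset.range a).filter q).card + ((Finset.Ico a b).filter q).card := by
  rw [Finset.range_eq_Ico,
    ← Finset.Ico_union_Ico_eq_Ico (Nat.zero_le a) h, Finset.filter_union,
    Finset.card_union_of_disjoint]
  · rw [Finset.range_eq_Ico]
  exact Finset.disjoint_filter_filter (p := q) (q := q) (Finset.Ico_disjoint_Ico_consecutive 0 a b)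

lemma countP_le_split (l : List ℕ) (v : ℕ) :
    l.countP (fun a => decide (v ≤ a)) =
      l.countP (fun a => decide (v + 1 ≤ a)) + l.count v := by
  induction l with
  | nil => simp
  | cons a tl ih =>
    rw [List.count_cons, List.countP_cons, List.countP_cons, ih]
    by_cases h2 : v + 1 ≤ a
    · have hne : ¬(a = v) := by omega
      simp [h2, show v ≤ a by omega, hne]; omega
    · by_cases h1 : v ≤ a
      · have heq : a = v := by omega
        simp [h1, h2, heq]; omega
      · have hne : ¬(a = v) := by omega
        simp [h1, h2, hne]

lemma sum_mod_two (l : List ℕ) :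
    l.sum % 2 = (l.countP (fun a => decide (a % 2 = 1))) % 2 := by
  induction l with
  | nil => simp
  | cons a tl ih =>
    rw [List.sum_cons, List.countP_cons]
    by_cases h : a % 2 = 1 <;> simp [h] <;> omega

/- ### Lemmas about sorted lists -/

lemma getD_anti {lam : List ℕ} (h : lam.Pairwise (· ≥ ·)) {j k : ℕ} (hjk : j ≤ k) :
    lam.getD k 0 ≤ lam.getD j 0 := by
  by_cases hk : k < lam.length
  · have hj : j < lam.length := lt_of_le_of_lt hjk hk
    rw [List.getD_eq_getElem _ _ hk, List.getD_eq_getElem _ _ hj]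
    rcases eq_or_lt_of_le hjk with rfl | hlt
    · exact le_refl _
    · exact List.pairwise_iff_getElem.mp h j k hj hk hlt
  · rw [List.getD_eq_default _ _ (not_lt.mp hk)]
    exact Nat.zero_le _

lemma getD_mem {lam : List ℕ} {j : ℕ} (hj : j < lam.length) :
    lam.getD j 0 ∈ lam := by
  rw [List.getD_eq_getElem _ _ hj]; exact List.getElem_mem _

lemma lt_countP_iff {lam : List ℕ} (h : lam.Pairwise (· ≥ ·)) (v : ℕ) :
    ∀ j : ℕ, j < lam.countP (fun a => decide (v ≤ a)) ↔
      (j < lam.length ∧ v ≤ lam.getD j 0) := by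
  induction lam with
  | nil => simp
  | cons a tl ih =>
    have hs : tl.Pairwise (· ≥ ·) := h.of_cons
    intro j
    by_cases hva : v ≤ a
    · rw [List.countP_cons_of_pos (by simpa using hva)]
      cases j with
      | zero => simpa using hva
      | succ j =>
        rw [Nat.succ_lt_succ_iff, ih hs j]
        simp [Nat.succ_lt_succ_iff]
    · rw [List.countP_cons_of_neg (by simpa using hva)]
      have h0 : tl.countP (fun a => decide (v ≤ a)) = 0 := by
        rw [List.countP_eq_zero]
        intro x hx
        have hxa : a ≥ x := (List.pairwise_cons.mp h).1 x hx
        simp only [decide_eq_true_eq]; omega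
      rw [h0]
      simp only [Nat.not_lt_zero, false_iff, not_and, not_le]
      intro hj
      have := getD_anti h (Nat.zero_le j)
      rw [List.getD_cons_zero] at this
      omega

/- ### Lemmas about strictly increasing lists -/

lemma countP_lt_getD {xs : List ℕ} (h : xs.Pairwise (· < ·)) :
    ∀ {k : ℕ}, k < xs.length →
      xs.countP (fun y => decide (y < xs.getD k 0)) = k := by
  induction xs with
  | nil => intro k hk; simp at hk
  | cons a tl ih =>
    intro k hk
    have hhead : ∀ x ∈ tl, a < x := (List.pairwise_cons.mp h).1
    cases k with
    | zero =>
      rw [List.getD_cons_zero, List.countP_eq_zero.mpr]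
      intro x hx
      simp only [decide_eq_true_eq]
      rcases List.mem_cons.mp hx with rfl | hx'
      · omega
      · have := hhead x hx'; omega
    | succ k =>
      have hk' : k < tl.length := by simpa using hk
      rw [List.getD_cons_succ,
        List.countP_cons_of_pos (by
          simp only [decide_eq_true_eq]
          exact hhead _ (getD_mem hk')),
        ih (List.pairwise_cons.mp h).2 hk']

lemma countP_ge_getD {xs : List ℕ} (h : xs.Pairwise (· < ·)) :
    ∀ {k : ℕ}, k < xs.length →
      xs.countP (fun y => decide (xs.getD k 0 ≤ y)) = xs.length - k := by
  induction xs with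
  | nil => intro k hk; simp at hk
  | cons a tl ih =>
    intro k hk
    have hhead : ∀ x ∈ tl, a < x := (List.pairwise_cons.mp h).1
    cases k with
    | zero =>
      rw [List.getD_cons_zero, List.countP_eq_length.mpr]
      · simp
      · intro x hx
        simp only [decide_eq_true_eq]
        rcases List.mem_cons.mp hx with rfl | hx'
        · omega
        · have := hhead x hx'; omega
    | succ k =>
      have hk' : k < tl.length := by simpa using hk
      rw [List.getD_cons_succ,
        List.countP_cons_of_neg (by
          simp only [decide_eq_true_eq]
          have := hhead _ (getD_mem hk'); omega),
        ih (List.pairwise_cons.mp h).2 hk']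
      simp [List.length_cons]

lemma countP_gt_getD {xs : List ℕ} (h : xs.Pairwise (· < ·)) :
    ∀ {k : ℕ}, k < xs.length →
      xs.countP (fun y => decide (xs.getD k 0 < y)) = xs.length - k - 1 := by
  induction xs with
  | nil => intro k hk; simp at hk
  | cons a tl ih =>
    intro k hk
    have hhead : ∀ x ∈ tl, a < x := (List.pairwise_cons.mp h).1
    cases k with
    | zero =>
      rw [List.getD_cons_zero,
        List.countP_cons_of_neg (by simp),
        List.countP_eq_length.mpr]
      · simp
      · intro x hx
        simp only [decide_eq_true_eq]
        exact hhead x hx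
    | succ k =>
      have hk' : k < tl.length := by simpa using hk
      rw [List.getD_cons_succ,
        List.countP_cons_of_neg (by
          simp only [decide_eq_true_eq]
          have := hhead _ (getD_mem hk'); omega),
        ih (List.pairwise_cons.mp h).2 hk']
      simp [List.length_cons]

lemma lt_getD_iff {xs : List ℕ} (h : xs.Pairwise (· < ·)) {k : ℕ}
    (hk : k < xs.length) (cv : ℕ) :
    cv < xs.getD k 0 ↔
      xs.length - k ≤ xs.countP (fun y => decide (cv < y)) := by
  constructor
  · intro hlt
    calc xs.length - k = xs.countP (fun y => decide (xs.getD k 0 ≤ y)) :=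
          (countP_ge_getD h hk).symm
      _ ≤ xs.countP (fun y => decide (cv < y)) := by
          apply List.countP_mono_left
          intro x _ hx
          simp only [decide_eq_true_eq] at hx ⊢
          omega
  · intro hc
    by_contra hnot
    push_neg at hnot
    have h1 : xs.countP (fun y => decide (cv < y)) ≤
        xs.countP (fun y => decide (xs.getD k 0 < y)) := by
      apply List.countP_mono_left
      intro x _ hx
      simp only [decide_eq_true_eq] at hx ⊢
      omega
    have h2 := countP_gt_getD h hk
    omega

/- ### The `s`-function and the complementary function -/

/-- the `s`-function: `sf lam j = (l - j) + λ_j` (0-based). -/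
def sf (lam : List ℕ) (j : ℕ) : ℕ := (lam.length - j) + lam.getD j 0

/-- the complementary function `cf lam i = l + i - λ^T_i`. -/
def cf (lam : List ℕ) (i : ℕ) : ℕ := lam.length + i - transposeRow lam i

lemma svals_append (lam : List ℕ) :
    svals (lam ++ [0]) = (List.range (lam.length + 1)).map (sf lam) := by
  apply List.ext_getElem
  · simp [svals]
  · intro k h1 h2
    have hk : k < lam.length + 1 := by simpa using h2
    simp only [svals, List.getElem_mapIdx, List.getElem_map, List.getElem_range, sf]
    have hlen : (lam ++ [0]).length = lam.length + 1 := by simp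
    have hval : (lam ++ [0])[k]'(by omega) = lam.getD k 0 := by
      by_cases hkl : k < lam.length
      · rw [List.getElem_append_left hkl, List.getD_eq_getElem _ _ hkl]
      · have hke : k = lam.length := by omega
        subst hke
        rw [List.getElem_append_right (le_refl _), List.getD_eq_default _ _ (le_refl _)]
        simp
    rw [hval, hlen]
    omega

lemma sf_strictAnti {lam : List ℕ} (h : lam.Pairwise (· ≥ ·)) {j k : ℕ}
    (hjk : j < k) (hk : k ≤ lam.length) : sf lam k < sf lam j := by
  have h1 := getD_anti h (le_of_lt hjk)
  unfold sf
  omega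

lemma svals_pairwise {lam : List ℕ} (h : lam.Pairwise (· ≥ ·)) :
    (svals (lam ++ [0])).Pairwise (· > ·) := by
  rw [svals_append]
  rw [List.pairwise_iff_getElem]
  intro a b ha hb hab
  simp only [List.length_map, List.length_range] at ha hb
  simp only [List.getElem_map, List.getElem_range]
  exact sf_strictAnti h hab (by omega)

lemma transposeRow_le_length (lam : List ℕ) (i : ℕ) :
    transposeRow lam i ≤ lam.length := List.countP_le_length

lemma transposeRow_pos {lam : List ℕ} (h : lam.Pairwise (· ≥ ·)) {i : ℕ}
    (hi1 : 1 ≤ i) (hi2 : i ≤ lam.getD 0 0) : 1 ≤ transposeRow lam i := by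
  have hlam : 0 < lam.length := by
    rcases lam with _ | ⟨a, tl⟩
    · simp at hi2; omega
    · simp
  exact (lt_countP_iff h i 0).mpr ⟨hlam, hi2⟩

lemma cf_lt_sf {lam : List ℕ} (h : lam.Pairwise (· ≥ ·)) {i j : ℕ}
    (hj : j < transposeRow lam i) : cf lam i < sf lam j := by
  have ht := transposeRow_le_length lam i
  set t := transposeRow lam i with htdef
  have hct : lam.countP (fun a => decide (i ≤ a)) = t := rfl
  have h1 : t - 1 < lam.length ∧ i ≤ lam.getD (t - 1) 0 :=
    (lt_countP_iff h i (t - 1)).mp (by omega)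
  have h2 : lam.getD (t - 1) 0 ≤ lam.getD j 0 := getD_anti h (by omega)
  unfold sf cf
  omega

lemma sf_lt_cf {lam : List ℕ} (h : lam.Pairwise (· ≥ ·)) {i j : ℕ}
    (hi1 : 1 ≤ i) (hjt : transposeRow lam i ≤ j) (hj : j ≤ lam.length) :
    sf lam j < cf lam i := by
  have ht := transposeRow_le_length lam i
  set t := transposeRow lam i with htdef
  have hct : lam.countP (fun a => decide (i ≤ a)) = t := rfl
  have h1 : ¬ (j < lam.length ∧ i ≤ lam.getD j 0) := by
    intro hc
    have := (lt_countP_iff h i j).mpr hc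
    omega
  by_cases hjl : j < lam.length
  · have : lam.getD j 0 < i := by
      by_contra hcc; exact h1 ⟨hjl, by omega⟩
    unfold sf cf
    omega
  · have : lam.getD j 0 = 0 := List.getD_eq_default _ _ (by omega)
    unfold sf cf
    omega

/- ### The two complementary value sets -/

/-- The set of `s`-values. -/
def SS (lam : List ℕ) : Finset ℕ :=
  (Finset.range (lam.length + 1)).image (sf lam)

/-- The set of complementary values. -/
def CC (lam : List ℕ) : Finset ℕ :=
  (Finset.Icc 1 (lam.getD 0 0)).image (cf lam)

lemma cf_strictMonoOn {lam : List ℕ} (h : lam.Pairwise (· ≥ ·)) {i i' : ℕ}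
    (hi : 1 ≤ i) (hii' : i < i') : cf lam i < cf lam i' := by
  have h1 : transposeRow lam i' ≤ transposeRow lam i := by
    apply List.countP_mono_left
    intro x _ hx
    simp only [decide_eq_true_eq] at hx ⊢
    omega
  have h2 := transposeRow_le_length lam i
  unfold cf
  omega

lemma sf_injOn {lam : List ℕ} (h : lam.Pairwise (· ≥ ·)) :
    Set.InjOn (sf lam) (Finset.range (lam.length + 1)) := by
  intro a ha b hb hab
  simp only [Finset.coe_range, Set.mem_Iio] at ha hb
  by_contra hne
  rcases lt_or_gt_of_ne hne with hlt | hlt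
  · have := sf_strictAnti h hlt (by omega); omega
  · have := sf_strictAnti h hlt (by omega); omega

lemma cf_injOn {lam : List ℕ} (h : lam.Pairwise (· ≥ ·)) :
    Set.InjOn (cf lam) (Finset.Icc 1 (lam.getD 0 0)) := by
  intro a ha b hb hab
  simp only [Finset.coe_Icc, Set.mem_Icc] at ha hb
  by_contra hne
  rcases lt_or_gt_of_ne hne with hlt | hlt
  · have := cf_strictMonoOn h ha.1 hlt; omega
  · have := cf_strictMonoOn h hb.1 hlt; omega

lemma card_SS {lam : List ℕ} (h : lam.Pairwise (· ≥ ·)) :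
    (SS lam).card = lam.length + 1 := by
  rw [SS, Finset.card_image_of_injOn (sf_injOn h), Finset.card_range]

lemma card_CC {lam : List ℕ} (h : lam.Pairwise (· ≥ ·)) :
    (CC lam).card = lam.getD 0 0 := by
  rw [CC, Finset.card_image_of_injOn (cf_injOn h), Nat.card_Icc]
  omega

lemma SS_subset {lam : List ℕ} (h : lam.Pairwise (· ≥ ·)) :
    SS lam ⊆ Finset.Icc 0 (lam.length + lam.getD 0 0) := by
  intro x hx
  simp only [SS, Finset.mem_image, Finset.mem_range] at hx
  obtain ⟨j, hj, rfl⟩ := hx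
  have := getD_anti h (Nat.zero_le j)
  simp only [Finset.mem_Icc, sf]
  omega

lemma CC_subset {lam : List ℕ} (h : lam.Pairwise (· ≥ ·)) :
    CC lam ⊆ Finset.Icc 0 (lam.length + lam.getD 0 0) := by
  intro x hx
  simp only [CC, Finset.mem_image, Finset.mem_Icc] at hx
  obtain ⟨i, ⟨hi1, hi2⟩, rfl⟩ := hx
  simp only [Finset.mem_Icc, cf]
  omega

lemma SS_disj_CC {lam : List ℕ} (h : lam.Pairwise (· ≥ ·)) :
    Disjoint (SS lam) (CC lam) := by
  rw [Finset.disjoint_left]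
  intro x hxS hxC
  simp only [SS, Finset.mem_image, Finset.mem_range] at hxS
  simp only [CC, Finset.mem_image, Finset.mem_Icc] at hxC
  obtain ⟨j, hj, rfl⟩ := hxS
  obtain ⟨i, ⟨hi1, hi2⟩, hic⟩ := hxC
  by_cases hcase : j < transposeRow lam i
  · have := cf_lt_sf h hcase; omega
  · have hc1 : transposeRow lam i ≤ j := by omega
    have hc2 : j ≤ lam.length := by omega
    have := sf_lt_cf h hi1 hc1 hc2; omega

lemma union_SS_CC {lam : List ℕ} (h : lam.Pairwise (· ≥ ·)) :
    SS lam ∪ CC lam = Finset.Icc 0 (lam.length + lam.getD 0 0) := by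
  apply Finset.eq_of_subset_of_card_le
  · exact Finset.union_subset (SS_subset h) (CC_subset h)
  · rw [Finset.card_union_of_disjoint (SS_disj_CC h), card_SS h, card_CC h,
      Nat.card_Icc]
    omega

lemma card_split {lam : List ℕ} (h : lam.Pairwise (· ≥ ·)) (P : ℕ → Prop)
    [DecidablePred P] :
    ((Finset.Icc 0 (lam.length + lam.getD 0 0)).filter P).card =
      ((SS lam).filter P).card + ((CC lam).filter P).card := by
  rw [← union_SS_CC h, Finset.filter_union,
    Finset.card_union_of_disjoint (Finset.disjoint_filter_filter (SS_disj_CC h))]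

/- ### The core counting lemma -/

lemma core {lam : List ℕ} (hsort : lam.Pairwise (· ≥ ·))
    (hDn : ∀ m : ℕ, Even m → Even (lam.count m)) :
    ∀ t : ℕ, t ≤ lam.length → (t = 0 ∨ lam.getD t 0 < lam.getD (t - 1) 0) →
    ((Finset.range t).filter (fun j => (lam.getD j 0 + j) % 2 = 1)).card =
      (t + 1) / 2 := by
  intro t
  induction t using Nat.strong_induction_on with
  | _ t IH =>
  intro htl hbd
  rcases hbd with rfl | hbd
  · simp
  have ht1 : 1 ≤ t := by
    by_contra hc
    push_neg at hc
    interval_cases t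
    simp at hbd
  set v := lam.getD (t - 1) 0 with hv
  have hv1 : 1 ≤ v := by omega
  set t' := lam.countP (fun a => decide (v + 1 ≤ a)) with ht'
  have hiff := lt_countP_iff hsort (v + 1)
  have hiffv := lt_countP_iff hsort v
  have ht'lt : t' < t := by
    have := (hiff (t - 1)).not.mpr (by push_neg; intro _; omega)
    omega
  have hcv : lam.countP (fun a => decide (v ≤ a)) = t := by
    have hub : ¬ (t < lam.countP (fun a => decide (v ≤ a))) := by
      rw [hiffv t]
      push_neg
      intro htl2
      have := getD_anti hsort (show t - 1 ≤ t by omega)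
      omega
    have hlb : t - 1 < lam.countP (fun a => decide (v ≤ a)) := by
      rw [hiffv (t - 1)]
      exact ⟨by omega, le_refl _⟩
    omega
  have hblock : ∀ j, t' ≤ j → j < t → lam.getD j 0 = v := by
    intro j hj1 hj2
    have hub : lam.getD j 0 ≤ v := by
      have := (hiff j).not.mp (by omega)
      push_neg at this
      have hjl : j < lam.length := by omega
      have := this hjl
      omega
    have hlb : v ≤ lam.getD j 0 := by
      have := getD_anti hsort (show j ≤ t - 1 by omega)
      omega
    omega
  have hcount : t = t' + lam.count v := by
    rw [← hcv, countP_le_split]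
  have hbd' : t' = 0 ∨ lam.getD t' 0 < lam.getD (t' - 1) 0 := by
    rcases Nat.eq_zero_or_pos t' with h0 | hpos
    · left; exact h0
    · right
      have hup : v + 1 ≤ lam.getD (t' - 1) 0 := ((hiff (t' - 1)).mp (by omega)).2
      have hdown : lam.getD t' 0 = v := hblock t' (le_refl _) (by omega)
      omega
  have hIH := IH t' ht'lt (by omega) hbd'
  rw [filter_range_split t' t (by omega)]
  rw [hIH]
  have hcong : (Finset.Ico t' t).filter (fun j => (lam.getD j 0 + j) % 2 = 1) =
      (Finset.Ico t' t).filter (fun j => (v + j) % 2 = 1) := by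
    apply Finset.filter_congr
    intro j hj
    simp only [Finset.mem_Ico] at hj
    rw [hblock j hj.1 hj.2]
  rw [hcong]
  have hro := card_odd_range t
  have hro' := card_odd_range t'
  have hre := card_even_range t
  have hre' := card_even_range t'
  by_cases hvp : v % 2 = 1
  · have he : (Finset.Ico t' t).filter (fun j => (v + j) % 2 = 1) =
        (Finset.Ico t' t).filter (fun j => j % 2 = 0) := by
      apply Finset.filter_congr
      intro j _
      constructor <;> intro hh <;> omega
    rw [he]
    have h1 := filter_range_split t' t (by omega) (fun j => j % 2 = 0)
    omega
  · have heven : Even (lam.count v) :=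
      hDn v (Nat.even_iff.mpr (by omega))
    have he : (Finset.Ico t' t).filter (fun j => (v + j) % 2 = 1) =
        (Finset.Ico t' t).filter (fun j => j % 2 = 1) := by
      apply Finset.filter_congr
      intro j _
      constructor <;> intro hh <;> omega
    rw [he]
    have h1 := filter_range_split t' t (by omega) (fun j => j % 2 = 1)
    rw [Nat.even_iff] at heven
    omega

/- ### Evenness of the length -/

lemma countP_even_even {lam : List ℕ}
    (hDn : ∀ m : ℕ, Even m → Even (lam.count m)) :
    2 ∣ lam.countP (fun a => decide (a % 2 = 0)) := by
  rw [List.countP_eq_length_filter,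
    ← List.sum_toFinset_count_eq_length (lam.filter (fun a => decide (a % 2 = 0)))]
  apply Finset.dvd_sum
  intro v hv
  have hvev : v % 2 = 0 := by
    rw [List.mem_toFinset, List.mem_filter] at hv
    simpa using hv.2
  rw [List.count_filter (by simpa using hvev)]
  exact (hDn v (Nat.even_iff.mpr hvev)).two_dvd

lemma length_even {lam : List ℕ} {n : ℕ} (hsum : lam.sum = 2 * n)
    (hDn : ∀ m : ℕ, Even m → Even (lam.count m)) :
    lam.length % 2 = 0 := by
  have h1 := List.length_eq_countP_add_countP (fun a : ℕ => decide (a % 2 = 1)) (l := lam)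
  have h2 : lam.countP (fun a => decide ¬(decide (a % 2 = 1)) = true)
      = lam.countP (fun a => decide (a % 2 = 0)) := by
    apply List.countP_congr
    intro x _
    simp only [decide_eq_true_eq, decide_not, Bool.not_eq_true', decide_eq_false_iff_not]
    omega
  have h3 := countP_even_even hDn
  have h4 := sum_mod_two lam
  rw [hsum] at h4
  omega

/- ### Bridges between the sorted parity lists and `SS` -/

/-- The increasing list of values of `svals (lam ++ [0])` of parity `r`. -/
def pvals (lam : List ℕ) (r : ℕ) : List ℕ :=
  ((svals (lam ++ [0])).filter (fun x => decide (x % 2 = r))).reverse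

lemma oddVals_eq (lam : List ℕ) : oddVals (lam ++ [0]) = pvals lam 1 := rfl

lemma evenVals_eq (lam : List ℕ) : evenVals (lam ++ [0]) = pvals lam 0 := rfl

lemma pvals_pairwise {lam : List ℕ} (h : lam.Pairwise (· ≥ ·)) (r : ℕ) :
    (pvals lam r).Pairwise (· < ·) := by
  rw [pvals, List.pairwise_reverse]
  exact (svals_pairwise h).filter _

lemma pvals_nodup {lam : List ℕ} (h : lam.Pairwise (· ≥ ·)) (r : ℕ) :
    (pvals lam r).Nodup :=
  (pvals_pairwise h r).imp (fun h => Nat.ne_of_lt h)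

lemma pvals_toFinset {lam : List ℕ} (h : lam.Pairwise (· ≥ ·)) (r : ℕ) :
    (pvals lam r).toFinset = (SS lam).filter (fun x => x % 2 = r) := by
  ext x
  simp only [pvals, List.toFinset_reverse, List.mem_toFinset, List.mem_filter,
    Finset.mem_filter, SS, Finset.mem_image, Finset.mem_range, svals_append,
    List.mem_map, List.mem_range, decide_eq_true_eq]

lemma pvals_countP {lam : List ℕ} (h : lam.Pairwise (· ≥ ·)) (r : ℕ)
    (q : ℕ → Prop) [DecidablePred q] :
    (pvals lam r).countP (fun y => decide (q y)) =
      ((SS lam).filter (fun x => x % 2 = r ∧ q x)).card := by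
  rw [List.countP_eq_length_filter,
    ← List.toFinset_card_of_nodup ((pvals_nodup h r).filter _),
    List.toFinset_filter, pvals_toFinset h r, Finset.filter_filter]
  congr 1
  apply Finset.filter_congr
  intro x _
  simp only [decide_eq_true_eq]

lemma pvals_length {lam : List ℕ} (h : lam.Pairwise (· ≥ ·)) (r : ℕ) :
    (pvals lam r).length = ((SS lam).filter (fun x => x % 2 = r)).card := by
  rw [← pvals_toFinset h r, List.toFinset_card_of_nodup (pvals_nodup h r)]

/- ### Counting `s`-values of given parity -/

lemma card_SS_parity {lam : List ℕ} (hsort : lam.Pairwise (· ≥ ·))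
    (hle : lam.length % 2 = 0) (r : ℕ) (hr : r < 2) :
    ((SS lam).filter (fun x => x % 2 = r)).card =
      ((Finset.range lam.length).filter
        (fun j => (lam.getD j 0 + j) % 2 = r)).card + (1 - r) := by
  rw [SS, Finset.filter_image,
    Finset.card_image_of_injOn ((sf_injOn hsort).mono (by
      intro x hx
      simpa using (Finset.filter_subset _ _) hx))]
  rw [filter_range_split lam.length (lam.length + 1) (by omega)]
  have hpart1 : ((Finset.range lam.length).filter (fun a => sf lam a % 2 = r)) =
      ((Finset.range lam.length).filter (fun j => (lam.getD j 0 + j) % 2 = r)) := by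
    apply Finset.filter_congr
    intro j hj
    simp only [Finset.mem_range] at hj
    simp only [sf]
    constructor <;> intro hh <;> omega
  rw [hpart1]
  congr 1
  · rw [show Finset.Ico lam.length (lam.length + 1) = {lam.length} by
      rw [Finset.Ico_add_one_right_eq_Icc, Finset.Icc_self]]
    have hsfl : sf lam lam.length = 0 := by
      simp [sf, List.getD_eq_default _ _ (le_refl lam.length)]
    rcases (by omega : r = 0 ∨ r = 1) with rfl | rfl
    · rw [Finset.filter_singleton, if_pos (by simp [hsfl])]
      simp
    · rw [Finset.filter_singleton, if_neg (by simp [hsfl])]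
      simp

lemma card_range_parity_odd {lam : List ℕ} (hsort : lam.Pairwise (· ≥ ·))
    (hDn : ∀ m : ℕ, Even m → Even (lam.count m))
    (hpos : ∀ x ∈ lam, 0 < x) {t : ℕ} (htl : t ≤ lam.length)
    (hbd : t = 0 ∨ lam.getD t 0 < lam.getD (t - 1) 0) :
    ((Finset.range t).filter (fun j => (lam.getD j 0 + j) % 2 = 1)).card =
      (t + 1) / 2 := core hsort hDn t htl hbd

lemma card_range_parity_even {lam : List ℕ} (hsort : lam.Pairwise (· ≥ ·))
    (hDn : ∀ m : ℕ, Even m → Even (lam.count m))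
    (hpos : ∀ x ∈ lam, 0 < x) {t : ℕ} (htl : t ≤ lam.length)
    (hbd : t = 0 ∨ lam.getD t 0 < lam.getD (t - 1) 0) :
    ((Finset.range t).filter (fun j => (lam.getD j 0 + j) % 2 = 0)).card =
      t / 2 := by
  have h1 := core hsort hDn t htl hbd
  have h2 := Finset.card_filter_add_card_filter_not
    (s := Finset.range t) (p := fun j => (lam.getD j 0 + j) % 2 = 1)
  have h3 : (Finset.range t).filter (fun j => ¬ (lam.getD j 0 + j) % 2 = 1) =
      (Finset.range t).filter (fun j => (lam.getD j 0 + j) % 2 = 0) := by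
    apply Finset.filter_congr
    intro j _
    constructor <;> intro hh <;> omega
  rw [h3] at h2
  rw [Finset.card_range] at h2
  omega

/-- boundary property of `t = λ^T_i`. -/
lemma transposeRow_boundary {lam : List ℕ} (hsort : lam.Pairwise (· ≥ ·))
    {i : ℕ} (hi1 : 1 ≤ i) :
    lam.getD (transposeRow lam i) 0 < i ∧
      (transposeRow lam i = 0 ∨
        lam.getD (transposeRow lam i) 0 <
          lam.getD (transposeRow lam i - 1) 0) := by
  set t := transposeRow lam i with ht
  have hct : lam.countP (fun a => decide (i ≤ a)) = t := rfl
  have htl := transposeRow_le_length lam i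
  have hub : lam.getD t 0 < i := by
    have := (lt_countP_iff hsort i t).not.mp (by omega)
    push_neg at this
    by_cases hl : t < lam.length
    · have := this hl; omega
    · rw [List.getD_eq_default _ _ (by omega)]; omega
  refine ⟨hub, ?_⟩
  rcases Nat.eq_zero_or_pos t with h0 | hpos
  · left; exact h0
  · right
    have := ((lt_countP_iff hsort i (t - 1)).mp (by omega)).2
    omega

/-- The count of `s`-values of parity `r` above `cf lam i`. -/
lemma count_above_cf {lam : List ℕ} (hsort : lam.Pairwise (· ≥ ·))
    (hle : lam.length % 2 = 0) {i : ℕ} (hi1 : 1 ≤ i) (hi2 : i ≤ lam.getD 0 0)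
    (r : ℕ) :
    ((SS lam).filter (fun x => x % 2 = r ∧ cf lam i < x)).card =
      ((Finset.range (transposeRow lam i)).filter
        (fun j => (lam.getD j 0 + j) % 2 = r)).card := by
  rw [SS, Finset.filter_image,
    Finset.card_image_of_injOn ((sf_injOn hsort).mono (by
      intro x hx
      simpa using (Finset.filter_subset _ _) hx))]
  have htl := transposeRow_le_length lam i
  apply Finset.card_bij (fun j _ => j)
  · intro j hj
    simp only [Finset.mem_filter, Finset.mem_range] at hj ⊢
    obtain ⟨hj1, hj2, hj3⟩ := hj
    have hjt : j < transposeRow lam i := by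
      by_contra hc
      push_neg at hc
      have := sf_lt_cf hsort hi1 hc (by omega)
      omega
    refine ⟨hjt, ?_⟩
    simp only [sf] at hj2
    omega
  · intro a ha b hb hab
    exact hab
  · intro j hj
    simp only [Finset.mem_filter, Finset.mem_range] at hj
    obtain ⟨hj1, hj2⟩ := hj
    refine ⟨j, ?_, rfl⟩
    simp only [Finset.mem_filter, Finset.mem_range]
    have hcf := cf_lt_sf hsort hj1
    refine ⟨by omega, ?_, hcf⟩
    simp only [sf]
    omega

/- ### The main counting identity -/

lemma main_count {lam : List ℕ} (hsort : lam.Pairwise (· ≥ ·))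
    (hle : lam.length % 2 = 0) {r p k : ℕ} (hr : r < 2) (hp1 : 1 ≤ p)
    (hk : k < (pvals lam r).length)
    (hkp : (pvals lam r).length - k = p) :
    ((pvals lam r).getD k 0) % 2 = r ∧
    ((pvals lam r).getD k 0 + 1 - r) / 2 =
      k + ((Finset.Icc 1 (lam.getD 0 0)).filter
        (fun i => cf lam i % 2 = r ∧ cf lam i < (pvals lam r).getD k 0)).card ∧
    (∀ i, 1 ≤ i → i ≤ lam.getD 0 0 →
      (cf lam i < (pvals lam r).getD k 0 ↔
        p ≤ ((Finset.range (transposeRow lam i)).filter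
          (fun j => (lam.getD j 0 + j) % 2 = r)).card)) := by
  have hpw := pvals_pairwise hsort r
  have hOmem : (pvals lam r).getD k 0 ∈ pvals lam r := by
    rw [List.getD_eq_getElem _ _ hk]; exact List.getElem_mem _
  have hOfin : (pvals lam r).getD k 0 ∈ (SS lam).filter (fun x => x % 2 = r) := by
    rw [← pvals_toFinset hsort r]; exact List.mem_toFinset.mpr hOmem
  have hOr : ((pvals lam r).getD k 0) % 2 = r := (Finset.mem_filter.mp hOfin).2
  have hOSS : (pvals lam r).getD k 0 ∈ SS lam := (Finset.mem_filter.mp hOfin).1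
  have hOL : (pvals lam r).getD k 0 ≤ lam.length + lam.getD 0 0 := by
    have := SS_subset hsort hOSS
    simp only [Finset.mem_Icc] at this
    omega
  refine ⟨hOr, ?_, ?_⟩
  · have hA : ((SS lam).filter
        (fun x => x % 2 = r ∧ x < (pvals lam r).getD k 0)).card = k := by
      rw [← pvals_countP hsort r (fun y => y < (pvals lam r).getD k 0)]
      exact countP_lt_getD hpw hk
    have hsplit := card_split hsort
      (fun x => x % 2 = r ∧ x < (pvals lam r).getD k 0)
    have hL : ((Finset.Icc 0 (lam.length + lam.getD 0 0)).filter
        (fun x => x % 2 = r ∧ x < (pvals lam r).getD k 0)).card =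
        ((pvals lam r).getD k 0 + 1 - r) / 2 := by
      have hset : (Finset.Icc 0 (lam.length + lam.getD 0 0)).filter
          (fun x => x % 2 = r ∧ x < (pvals lam r).getD k 0) =
          (Finset.range ((pvals lam r).getD k 0)).filter
            (fun x => x % 2 = r) := by
        ext x
        simp only [Finset.mem_filter, Finset.mem_Icc, Finset.mem_range]
        constructor
        · rintro ⟨_, h2, h3⟩; exact ⟨h3, h2⟩
        · rintro ⟨h1, h2⟩; exact ⟨⟨Nat.zero_le _, by omega⟩, h2, h1⟩
      rw [hset]
      rcases (by omega : r = 0 ∨ r = 1) with rfl | rfl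
      · rw [card_even_range]; omega
      · rw [card_odd_range]; omega
    have hC : ((CC lam).filter
        (fun x => x % 2 = r ∧ x < (pvals lam r).getD k 0)).card =
        ((Finset.Icc 1 (lam.getD 0 0)).filter
          (fun i => cf lam i % 2 = r ∧
            cf lam i < (pvals lam r).getD k 0)).card := by
      rw [CC, Finset.filter_image,
        Finset.card_image_of_injOn ((cf_injOn hsort).mono (by
          intro x hx
          simpa using (Finset.filter_subset _ _) hx))]
    omega
  · intro i hi1 hi2
    rw [lt_getD_iff hpw hk (cf lam i), hkp,
      pvals_countP hsort r (fun y => cf lam i < y),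
      count_above_cf hsort hle hi1 hi2 r]

end ClosedDn

open ClosedDn in
/-- **Closed formula for the symbol, `D_n` theory.**  For a rigid `D_n`
partition `lam` of `2n` with (even) length `l` and `M = l/2`, the symbol
`(α_1, …, α_M; β_1, …, β_{M+1})` of `lam` in the `D_n` theory (computed from
`lam ++ [0]`) satisfies, for `1 ≤ p ≤ M`: `α_{M+1-p}` equals the number of
`1 ≤ i ≤ λ_1` for which either (`λ^T_i` odd, `i` even, `(λ^T_i+1)/2 ≥ p`) or
(`λ^T_i` even, `i` odd, `λ^T_i/2 ≥ p`); and for `1 ≤ p ≤ M+1`: `β_{M+2-p}`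
equals the number of `1 ≤ i ≤ λ_1` for which either (`λ^T_i` even, `i` even,
`λ^T_i/2 ≥ p`) or (`λ^T_i` odd, `i` odd, `(λ^T_i-1)/2 ≥ p`). -/
theorem closed_formula_Dn (n : ℕ) (hn : 0 < n) (lam : List ℕ) (M : ℕ)
    (hsort : lam.Pairwise (· ≥ ·))
    (hpos : ∀ x ∈ lam, 0 < x)
    (hsum : lam.sum = 2 * n)
    (hDn : ∀ m : ℕ, Even m → Even (lam.count m))
    (hgap : ∀ i : ℕ, i + 1 < lam.length → lam.getD i 0 ≤ lam.getD (i + 1) 0 + 1)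
    (hrig : ∀ m : ℕ, Odd m → lam.count m ≠ 2)
    (hM : M = lam.length / 2) :
    (∀ p : ℕ, 1 ≤ p → p ≤ M →
      (topRow (lam ++ [0])).getD (M - p) 0 =
        ((Finset.Icc 1 (lam.getD 0 0)).filter (fun i =>
          ((transposeRow lam i) % 2 = 1 ∧ i % 2 = 0 ∧
            p ≤ ((transposeRow lam i) + 1) / 2) ∨
          ((transposeRow lam i) % 2 = 0 ∧ i % 2 = 1 ∧
            p ≤ (transposeRow lam i) / 2))).card) ∧
    (∀ p : ℕ, 1 ≤ p → p ≤ M + 1 →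
      (botRow (lam ++ [0])).getD (M + 1 - p) 0 =
        ((Finset.Icc 1 (lam.getD 0 0)).filter (fun i =>
          ((transposeRow lam i) % 2 = 0 ∧ i % 2 = 0 ∧
            p ≤ (transposeRow lam i) / 2) ∨
          ((transposeRow lam i) % 2 = 1 ∧ i % 2 = 1 ∧
            p ≤ ((transposeRow lam i) - 1) / 2))).card) := by
  have hle : lam.length % 2 = 0 := length_even hsum hDn
  have hl1 : 1 ≤ lam.length := by
    rcases lam with _ | ⟨a, tl⟩
    · simp at hsum; omega
    · simp
  have hbdl : lam.length = 0 ∨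
      lam.getD lam.length 0 < lam.getD (lam.length - 1) 0 := by
    right
    rw [List.getD_eq_default _ _ (le_refl _)]
    exact hpos _ (getD_mem (by omega))
  have hov_len : (pvals lam 1).length = M := by
    rw [pvals_length hsort, card_SS_parity hsort hle 1 (by omega),
      card_range_parity_odd hsort hDn hpos (le_refl _) hbdl]
    omega
  have hev_len : (pvals lam 0).length = M + 1 := by
    rw [pvals_length hsort, card_SS_parity hsort hle 0 (by omega),
      card_range_parity_even hsort hDn hpos (le_refl _) hbdl]
    omega
  constructor
  · intro p hp1 hp2
    have hk : M - p < (pvals lam 1).length := by omega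
    have htoplen : M - p < (topRow (lam ++ [0])).length := by
      rw [topRow, List.length_mapIdx, oddVals_eq, hov_len]; omega
    have htop : (topRow (lam ++ [0])).getD (M - p) 0 =
        ((pvals lam 1).getD (M - p) 0 - 1) / 2 - (M - p) := by
      have h1 : topRow (lam ++ [0]) =
          (pvals lam 1).mapIdx (fun i v => (v - 1) / 2 - i) := rfl
      rw [h1, List.getD_eq_getElem _ _ (by simpa using hk),
        List.getElem_mapIdx, List.getD_eq_getElem _ _ hk]
    rw [htop]
    obtain ⟨hOr, hId, hIff⟩ := main_count hsort hle (by omega : (1:ℕ) < 2)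
      hp1 hk (by omega)
    have hconv : ((Finset.Icc 1 (lam.getD 0 0)).filter
        (fun i => cf lam i % 2 = 1 ∧
          cf lam i < (pvals lam 1).getD (M - p) 0)).card =
        ((Finset.Icc 1 (lam.getD 0 0)).filter (fun i =>
          ((transposeRow lam i) % 2 = 1 ∧ i % 2 = 0 ∧
            p ≤ ((transposeRow lam i) + 1) / 2) ∨
          ((transposeRow lam i) % 2 = 0 ∧ i % 2 = 1 ∧
            p ≤ (transposeRow lam i) / 2))).card := by
      congr 1
      apply Finset.filter_congr
      intro i hi
      simp only [Finset.mem_Icc] at hi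
      have hIffi := hIff i hi.1 hi.2
      have hbd := transposeRow_boundary hsort hi.1
      have hodd := card_range_parity_odd hsort hDn hpos
        (transposeRow_le_length lam i) hbd.2
      rw [hodd] at hIffi
      have htle := transposeRow_le_length lam i
      have hcf : cf lam i = lam.length + i - transposeRow lam i := rfl
      rw [hcf] at hIffi ⊢
      omega
    rw [hconv] at hId
    omega
  · intro p hp1 hp2
    have hk : M + 1 - p < (pvals lam 0).length := by omega
    have hbotlen : M + 1 - p < (botRow (lam ++ [0])).length := by
      rw [botRow, List.length_mapIdx, evenVals_eq, hev_len]; omega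
    have hbot : (botRow (lam ++ [0])).getD (M + 1 - p) 0 =
        ((pvals lam 0).getD (M + 1 - p) 0) / 2 - (M + 1 - p) := by
      have h1 : botRow (lam ++ [0]) =
          (pvals lam 0).mapIdx (fun i v => v / 2 - i) := rfl
      rw [h1, List.getD_eq_getElem _ _ (by simpa using hk),
        List.getElem_mapIdx, List.getD_eq_getElem _ _ hk]
    rw [hbot]
    obtain ⟨hOr, hId, hIff⟩ := main_count hsort hle (by omega : (0:ℕ) < 2)
      hp1 hk (by omega)
    have hconv : ((Finset.Icc 1 (lam.getD 0 0)).filter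
        (fun i => cf lam i % 2 = 0 ∧
          cf lam i < (pvals lam 0).getD (M + 1 - p) 0)).card =
        ((Finset.Icc 1 (lam.getD 0 0)).filter (fun i =>
          ((transposeRow lam i) % 2 = 0 ∧ i % 2 = 0 ∧
            p ≤ (transposeRow lam i) / 2) ∨
          ((transposeRow lam i) % 2 = 1 ∧ i % 2 = 1 ∧
            p ≤ ((transposeRow lam i) - 1) / 2))).card := by
      congr 1
      apply Finset.filter_congr
      intro i hi
      simp only [Finset.mem_Icc] at hi
      have hIffi := hIff i hi.1 hi.2
      have hbd := transposeRow_boundary hsort hi.1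
      have heven := card_range_parity_even hsort hDn hpos
        (transposeRow_le_length lam i) hbd.2
      rw [heven] at hIffi
      have htle := transposeRow_le_length lam i
      have hcf : cf lam i = lam.length + i - transposeRow lam i := rfl
      rw [hcf] at hIffi ⊢
      omega
    rw [hconv] at hId
    omega
end
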